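/- arXiv:2211.04174 — 6 statements merged into one kernel-verified Lean document; each statement's English description precedes it below -/
import Mathlib

section
/- Let n ≥ 1 and let X_1, …, X_n be i.i.d. real random variables with E[X_1] = 0 admitting a Stein kernel τ_1 with E[τ_1(X_1)^2] < ∞. Let W = (X_1 + … + X_n)/√n and let τ := (1/n)·Σ_{i=1}^n τ_1(X_i). Then for every differentiable f : ℝ → ℝ that is bounded with bounded derivative, E[W·f(W)] = E[τ·f'(W)]. -/
open MeasureTheory ProbabilityTheory
open scoped ENNReal

/-- A measurable function `τ : ℝ → ℝ` is a *Stein kernel* for a distribution `μ` with mean `m`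
if `E[(X - m) f(X)] = E[τ(X) f'(X)]` for every differentiable `f : ℝ → ℝ` that is bounded
with bounded derivative and for which both expectations exist. -/
def IsSteinKernel (μ : Measure ℝ) (m : ℝ) (τ : ℝ → ℝ) : Prop :=
  Measurable τ ∧
  ∀ f : ℝ → ℝ, Differentiable ℝ f →
    (∃ M, ∀ x, |f x| ≤ M) → (∃ M, ∀ x, |deriv f x| ≤ M) →
    Integrable (fun x => (x - m) * f x) μ →
    Integrable (fun x => τ x * deriv f x) μ →
    ∫ x, (x - m) * f x ∂μ = ∫ x, τ x * deriv f x ∂μ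

/-- **Stein identity for the standardized sum.**
If `X₁, …, Xₙ` are i.i.d. with law `μ`, mean `0`, and Stein kernel `τ₁` with
`E[τ₁(X₁)²] < ∞`, then with `W = (∑ Xᵢ)/√n` and `τ = (1/n) ∑ τ₁(Xᵢ)`, one has
`E[W f(W)] = E[τ f'(W)]` for every differentiable `f` that is bounded with bounded
derivative. -/
theorem stein_identity_for_sum
    (n : ℕ) (hn : 1 ≤ n)
    (μ : Measure ℝ) (hprob : IsProbabilityMeasure μ)
    (hint : Integrable (fun x => x) μ) (hmean : ∫ x, x ∂μ = 0)
    (τ₁ : ℝ → ℝ) (hτ : IsSteinKernel μ 0 τ₁)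
    (hτ2 : Integrable (fun x => (τ₁ x) ^ 2) μ)
    (f : ℝ → ℝ) (hf : Differentiable ℝ f)
    (hfb : ∃ M, ∀ x, |f x| ≤ M) (hf'b : ∃ M, ∀ x, |deriv f x| ≤ M) :
    ∫ ω, ((∑ i, ω i) / Real.sqrt n) * f ((∑ i, ω i) / Real.sqrt n)
        ∂(Measure.pi fun _ : Fin n => μ)
      = ∫ ω, ((∑ i, τ₁ (ω i)) / n) * deriv f ((∑ i, ω i) / Real.sqrt n)
          ∂(Measure.pi fun _ : Fin n => μ) := by
  obtain ⟨m, rfl⟩ : ∃ m, n = m + 1 := ⟨n - 1, (Nat.succ_pred_eq_of_pos hn).symm⟩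
  have hτm : Measurable τ₁ := hτ.1
  have hτint : Integrable τ₁ μ :=
    ((memLp_two_iff_integrable_sq hτm.aestronglyMeasurable).2 hτ2).integrable one_le_two
  have hfm : Measurable f := hf.continuous.measurable
  have hf'm : Measurable (deriv f) := measurable_deriv f
  obtain ⟨Mf, hMf⟩ := hfb
  obtain ⟨Mf', hMf'⟩ := hf'b
  set c : ℝ := Real.sqrt ((m + 1 : ℕ) : ℝ) with hc_def
  have hcpos : 0 < c := Real.sqrt_pos.2 (by positivity)
  have hcc : c * c = ((m + 1 : ℕ) : ℝ) := Real.mul_self_sqrt (by positivity)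
  set π : Measure (Fin (m + 1) → ℝ) := Measure.pi (fun _ => μ) with hπ
  set π' : Measure (Fin m → ℝ) := Measure.pi (fun _ : Fin m => μ) with hπ'
  have key : ∀ i : Fin (m + 1),
      Integrable (fun ω : Fin (m + 1) → ℝ => ω i * f ((∑ k, ω k) / c)) π ∧
      Integrable (fun ω : Fin (m + 1) → ℝ => τ₁ (ω i) * deriv f ((∑ k, ω k) / c)) π ∧
      ∫ ω, ω i * f ((∑ k, ω k) / c) ∂π
        = (∫ ω, τ₁ (ω i) * deriv f ((∑ k, ω k) / c) ∂π) * (1 / c) := by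
    intro i
    set e := MeasurableEquiv.piFinSuccAbove (fun _ : Fin (m + 1) => ℝ) i with he
    have hmp : MeasurePreserving e π (μ.prod π') :=
      measurePreserving_piFinSuccAbove (fun _ => μ) i
    have hfstmp : MeasurePreserving (Prod.fst : ℝ × (Fin m → ℝ) → ℝ) (μ.prod π') μ :=
      ⟨measurable_fst, by simp⟩
    set G : ℝ × (Fin m → ℝ) → ℝ := fun p => p.1 * f ((p.1 + ∑ j, p.2 j) / c) with hG
    set G' : ℝ × (Fin m → ℝ) → ℝ :=
      fun p => τ₁ p.1 * deriv f ((p.1 + ∑ j, p.2 j) / c) with hG'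
    have hEfst : ∀ ω : Fin (m + 1) → ℝ, (e ω).1 = ω i := fun ω => rfl
    have hEsum : ∀ ω : Fin (m + 1) → ℝ, (e ω).1 + ∑ j, (e ω).2 j = ∑ k, ω k := by
      intro ω
      exact (Fin.sum_univ_succAbove ω i).symm
    have hcompG : ∀ ω, G (e ω) = ω i * f ((∑ k, ω k) / c) := by
      intro ω; rw [hG]; simp only; rw [hEsum ω, hEfst ω]
    have hcompG' : ∀ ω, G' (e ω) = τ₁ (ω i) * deriv f ((∑ k, ω k) / c) := by
      intro ω; rw [hG']; simp only; rw [hEsum ω, hEfst ω]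
    -- measurability of the inner affine map
    have hsm : Measurable (fun p : ℝ × (Fin m → ℝ) => (p.1 + ∑ j, p.2 j) / c) :=
      (measurable_fst.add
        (Finset.measurable_sum _ fun j _ => (measurable_pi_apply j).comp measurable_snd)).div_const c
    -- integrability on the product
    have h1 : Integrable (fun p : ℝ × (Fin m → ℝ) => p.1) (μ.prod π') :=
      (hfstmp.integrable_comp hint.1).2 hint
    have hτ1 : Integrable (fun p : ℝ × (Fin m → ℝ) => τ₁ p.1) (μ.prod π') :=
      (hfstmp.integrable_comp hτint.1).2 hτint
    have hGint : Integrable G (μ.prod π') := by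
      have h2 : Integrable
          (fun p : ℝ × (Fin m → ℝ) => f ((p.1 + ∑ j, p.2 j) / c) * p.1) (μ.prod π') :=
        h1.bdd_mul (c := Mf) (hfm.comp hsm).aestronglyMeasurable
          (Filter.Eventually.of_forall fun p => by simpa [Real.norm_eq_abs] using hMf _)
      exact h2.congr (Filter.Eventually.of_forall fun p => mul_comm _ _)
    have hG'int : Integrable G' (μ.prod π') := by
      have h2 : Integrable
          (fun p : ℝ × (Fin m → ℝ) => deriv f ((p.1 + ∑ j, p.2 j) / c) * τ₁ p.1) (μ.prod π') :=
        hτ1.bdd_mul (c := Mf') (hf'm.comp hsm).aestronglyMeasurable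
          (Filter.Eventually.of_forall fun p => by simpa [Real.norm_eq_abs] using hMf' _)
      exact h2.congr (Filter.Eventually.of_forall fun p => mul_comm _ _)
    have hFint : Integrable (fun ω : Fin (m + 1) → ℝ => ω i * f ((∑ k, ω k) / c)) π := by
      have := (hmp.integrable_comp_emb e.measurableEmbedding).2 hGint
      exact this.congr (Filter.Eventually.of_forall fun ω => hcompG ω)
    have hF'int : Integrable
        (fun ω : Fin (m + 1) → ℝ => τ₁ (ω i) * deriv f ((∑ k, ω k) / c)) π := by
      have := (hmp.integrable_comp_emb e.measurableEmbedding).2 hG'int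
      exact this.congr (Filter.Eventually.of_forall fun ω => hcompG' ω)
    refine ⟨hFint, hF'int, ?_⟩
    -- inner Stein identity, for every fixed value of the remaining coordinates
    have inner_eq : ∀ y : Fin m → ℝ,
        ∫ x, x * f ((x + ∑ j, y j) / c) ∂μ
          = (∫ x, τ₁ x * deriv f ((x + ∑ j, y j) / c) ∂μ) * (1 / c) := by
      intro y
      set s : ℝ := ∑ j, y j with hs
      set g : ℝ → ℝ := fun x => f ((x + s) / c) with hg
      have hgd : ∀ x : ℝ, HasDerivAt g (deriv f ((x + s) / c) * (1 / c)) x := by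
        intro x
        have h1 : HasDerivAt (fun x : ℝ => (x + s) / c) (1 / c) x := by
          simpa using ((hasDerivAt_id x).add_const s).div_const c
        exact ((hf _).hasDerivAt.comp x h1)
      have hgdiff : Differentiable ℝ g := fun x => (hgd x).differentiableAt
      have hgderiv : deriv g = fun x => deriv f ((x + s) / c) * (1 / c) :=
        funext fun x => (hgd x).deriv
      have hgb : ∀ x, |g x| ≤ Mf := fun x => hMf _
      have hg'b : ∀ x, |deriv g x| ≤ Mf' * (1 / c) := by
        intro x
        simp only [hgderiv]
        rw [abs_mul, abs_of_pos (by positivity : (0 : ℝ) < 1 / c)]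
        exact mul_le_mul_of_nonneg_right (hMf' _) (by positivity)
      have hgm : Measurable g := hgdiff.continuous.measurable
      have int1 : Integrable (fun x => (x - 0) * g x) μ := by
        have h2 : Integrable (fun x => g x * x) μ :=
          hint.bdd_mul (c := Mf) hgm.aestronglyMeasurable
            (Filter.Eventually.of_forall fun x => by simpa [Real.norm_eq_abs] using hgb x)
        exact h2.congr (Filter.Eventually.of_forall fun x => by ring)
      have int2 : Integrable (fun x => τ₁ x * deriv g x) μ := by
        have hdm : Measurable (deriv g) := by
          rw [hgderiv]
          exact (hf'm.comp ((measurable_id.add_const s).div_const c)).mul_const _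
        have h2 : Integrable (fun x => deriv g x * τ₁ x) μ :=
          hτint.bdd_mul (c := Mf' * (1 / c)) hdm.aestronglyMeasurable
            (Filter.Eventually.of_forall fun x => by simpa [Real.norm_eq_abs] using hg'b x)
        exact h2.congr (Filter.Eventually.of_forall fun x => mul_comm _ _)
      have e1 := hτ.2 g hgdiff ⟨Mf, hgb⟩ ⟨Mf' * (1 / c), hg'b⟩ int1 int2
      have e2 : ∫ x, x * g x ∂μ = ∫ x, τ₁ x * deriv g x ∂μ := by
        simpa [sub_zero] using e1
      rw [show (fun x => x * f ((x + s) / c)) = fun x => x * g x from rfl]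
      rw [e2]
      simp only [hgderiv]
      rw [show (fun x => τ₁ x * (deriv f ((x + s) / c) * (1 / c)))
          = fun x => (τ₁ x * deriv f ((x + s) / c)) * (1 / c) from funext fun x => by ring]
      rw [integral_mul_const]
    -- now put things together by Fubini
    calc ∫ ω, ω i * f ((∑ k, ω k) / c) ∂π
        = ∫ p, G p ∂(μ.prod π') := by
          rw [← hmp.integral_comp' G]
          exact integral_congr_ae (Filter.Eventually.of_forall fun ω => (hcompG ω).symm)
      _ = ∫ y, ∫ x, G (x, y) ∂μ ∂π' := integral_prod_symm G hGint
      _ = ∫ y, (∫ x, G' (x, y) ∂μ) * (1 / c) ∂π' := by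
          refine integral_congr_ae (Filter.Eventually.of_forall fun y => ?_)
          exact inner_eq y
      _ = (∫ y, ∫ x, G' (x, y) ∂μ ∂π') * (1 / c) := integral_mul_const _ _
      _ = (∫ p, G' p ∂(μ.prod π')) * (1 / c) := by rw [← integral_prod_symm G' hG'int]
      _ = (∫ ω, τ₁ (ω i) * deriv f ((∑ k, ω k) / c) ∂π) * (1 / c) := by
          rw [← hmp.integral_comp' G']
          congr 1
          exact integral_congr_ae (Filter.Eventually.of_forall fun ω => (hcompG' ω))
  -- final assembly
  calc ∫ ω, ((∑ i, ω i) / c) * f ((∑ i, ω i) / c) ∂π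
      = ∫ ω, ∑ i, (ω i * f ((∑ k, ω k) / c)) / c ∂π := by
        refine integral_congr_ae (Filter.Eventually.of_forall fun ω => ?_)
        beta_reduce
        rw [div_mul_eq_mul_div, Finset.sum_mul, Finset.sum_div]
    _ = ∑ i, ∫ ω, (ω i * f ((∑ k, ω k) / c)) / c ∂π :=
        integral_finset_sum _ (fun i _ => ((key i).1).div_const c)
    _ = ∑ i : Fin (m + 1), (∫ ω, τ₁ (ω i) * deriv f ((∑ k, ω k) / c) ∂π)
          / ((m + 1 : ℕ) : ℝ) := by
        refine Finset.sum_congr rfl fun i _ => ?_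
        rw [integral_div, (key i).2.2, mul_one_div, div_div, hcc]
    _ = ∫ ω, ∑ i, (τ₁ (ω i) * deriv f ((∑ k, ω k) / c)) / ((m + 1 : ℕ) : ℝ) ∂π := by
        rw [integral_finset_sum _ (fun i _ => ((key i).2.1).div_const _)]
        exact Finset.sum_congr rfl fun i _ => (integral_div _ _).symm
    _ = ∫ ω, ((∑ i, τ₁ (ω i)) / ((m + 1 : ℕ) : ℝ)) * deriv f ((∑ i, ω i) / c) ∂π := by
        refine integral_congr_ae (Filter.Eventually.of_forall fun ω => ?_)
        beta_reduce
        rw [div_mul_eq_mul_div, ← Finset.sum_div, ← Finset.sum_mul]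
end

section
/- Let Z ~ N(0,1) and let h : ℝ → ℝ be bounded and measurable. Define f(w) = e^{w^2/2}·∫_{−∞}^w (h(x) − E[h(Z)])·e^{−x^2/2} dx (the bounded solution of the Stein equation f'(w) − w·f(w) = h(w) − E[h(Z)]), set f'(w) := h(w) − E[h(Z)] + w·f(w), and define g(w) = e^{w^2/2}·∫_{−∞}^w (f'(x) − E[f'(Z)])·e^{−x^2/2} dx. Then E[g(Z)] = (1/3)·E[(Z^3 − 3Z)·h(Z)]. -/
open MeasureTheory Set Real

noncomputable def Gs (x : ℝ) : ℝ := Real.exp (-x ^ 2 / 2)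

lemma Gs_def (x : ℝ) : Gs x = Real.exp (-x ^ 2 / 2) := rfl

lemma Gs_pos (x : ℝ) : 0 < Gs x := Real.exp_pos _

lemma measurable_Gs : Measurable Gs := by
  unfold Gs; fun_prop

lemma int_pow_gauss (n : ℕ) : Integrable (fun x : ℝ ↦ x ^ n * Gs x) := by
  have h := integrable_rpow_mul_exp_neg_mul_sq (b := (1/2:ℝ)) (by norm_num) (s := (n:ℝ))
    (by exact lt_of_lt_of_le (by norm_num) (Nat.cast_nonneg n))
  simp_rw [Real.rpow_natCast] at h
  refine h.congr (Filter.Eventually.of_forall fun x ↦ ?_)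
  unfold Gs; ring_nf

lemma int_abs_pow_gauss (n : ℕ) : Integrable (fun x : ℝ ↦ |x| ^ n * Gs x) := by
  refine (int_pow_gauss n).abs.congr (Filter.Eventually.of_forall fun x ↦ ?_)
  simp only []
  rw [abs_mul, abs_pow, abs_of_pos (Gs_pos x)]

lemma gauss_total : ∫ x : ℝ, Gs x = Real.sqrt (2 * Real.pi) := by
  have h := integral_gaussian (1/2 : ℝ)
  rw [show Real.pi / (1/2) = 2 * Real.pi by ring] at h
  rw [← h]
  congr 1; funext x; unfold Gs; ring_nf

lemma gauss_odd (n : ℕ) (hn : Odd n) : ∫ x : ℝ, x ^ n * Gs x = 0 := by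
  have h1 : ∫ x in Iic (0:ℝ), x ^ n * Gs x = - ∫ x in Ioi (0:ℝ), x ^ n * Gs x := by
    have := integral_comp_neg_Ioi (0:ℝ) (fun x ↦ x ^ n * Gs x)
    rw [neg_zero] at this
    rw [← this, ← integral_neg]
    refine setIntegral_congr_fun measurableSet_Ioi (fun x _ ↦ ?_)
    simp [Gs, hn.neg_pow, neg_pow]
  rw [← intervalIntegral.integral_Iic_add_Ioi ((int_pow_gauss n).integrableOn (s := Iic 0))
    ((int_pow_gauss n).integrableOn (s := Ioi 0)), h1, neg_add_cancel]

lemma hasDerivAt_Gs (x : ℝ) : HasDerivAt Gs (-x * Gs x) x := by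
  have h1 : HasDerivAt (fun y : ℝ ↦ -y ^ 2 / 2) (-x) x := by
    have e : (-x) = -(((2:ℕ):ℝ) * x ^ (2-1)) / 2 := by push_cast; ring
    rw [e]; exact (hasDerivAt_pow 2 x).neg.div_const 2
  have := h1.exp
  rw [show Gs = fun x => Real.exp (-x ^ 2 / 2) from rfl]
  simpa [Gs, mul_comm] using this

lemma tendsto_Gs_atBot : Filter.Tendsto Gs Filter.atBot (nhds 0) := by
  have h2 : Filter.Tendsto (fun x : ℝ ↦ x ^ 2) Filter.atBot Filter.atTop := by
    have : (fun x : ℝ ↦ x ^ 2) = (fun y : ℝ ↦ y ^ 2) ∘ (fun x : ℝ ↦ -x) := by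
      funext x; simp
    rw [this]
    refine Filter.Tendsto.comp ?_ Filter.tendsto_neg_atBot_atTop
    have h0 : Filter.Tendsto (fun x : ℝ ↦ x * x) Filter.atTop Filter.atTop :=
      Filter.Tendsto.atTop_mul_atTop₀ Filter.tendsto_id Filter.tendsto_id
    refine h0.congr (fun x ↦ by ring)
  have h3 : Filter.Tendsto (fun x : ℝ ↦ -x ^ 2 / 2) Filter.atBot Filter.atBot := by
    apply Filter.Tendsto.atBot_div_const (by norm_num)
    exact Filter.tendsto_neg_atBot_iff.mpr h2
  exact Real.tendsto_exp_atBot.comp h3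

lemma exact_Iic (w : ℝ) : ∫ x in Iic w, (-x) * Gs x = Gs w := by
  have := integral_Iic_of_hasDerivAt_of_tendsto' (a := w) (f := Gs)
    (f' := fun x ↦ -x * Gs x) (m := 0)
    (fun x _ ↦ hasDerivAt_Gs x)
    (by
      refine Integrable.integrableOn ?_
      refine ((int_pow_gauss 1).neg).congr (Filter.Eventually.of_forall fun x ↦ ?_)
      simp [pow_one])
    tendsto_Gs_atBot
  simpa using this

lemma exact_Ioi (w : ℝ) : ∫ x in Ioi w, x * Gs x = Gs w := by
  have h := integral_comp_neg_Ioi w (fun x ↦ -x * Gs x)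
  simp only [neg_neg] at h
  have h2 : ∀ x : ℝ, Gs (-x) = Gs x := by intro x; simp [Gs]
  calc ∫ x in Ioi w, x * Gs x = ∫ x in Ioi w, x * Gs (-x) := by
        refine setIntegral_congr_fun measurableSet_Ioi (fun x _ ↦ by rw [h2])
    _ = ∫ x in Iic (-w), -x * Gs x := h
    _ = Gs (-w) := exact_Iic _
    _ = Gs w := h2 w

lemma tail_Iic {w : ℝ} (hw : w ≤ 0) :
    ∫ x in Iic w, Gs x ≤ Real.sqrt (2 * Real.pi) * Real.exp 1 * Gs w := by
  have hsq : (1:ℝ) ≤ Real.sqrt (2 * Real.pi) := by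
    rw [show (1:ℝ) = Real.sqrt 1 by simp]
    exact Real.sqrt_le_sqrt (by nlinarith [Real.pi_gt_three])
  rcases le_or_gt w (-1) with h1 | h1
  · have hmono : ∫ x in Iic w, Gs x ≤ ∫ x in Iic w, (-x) * Gs x := by
      refine setIntegral_mono_on ((int_pow_gauss 0).congr
        (Filter.Eventually.of_forall (by intro x; simp)) |>.integrableOn)
        (((int_pow_gauss 1).neg).congr (Filter.Eventually.of_forall
          (fun x ↦ by simp [pow_one])) |>.integrableOn)
        measurableSet_Iic (fun x hx ↦ ?_)
      have : (1:ℝ) ≤ -x := by simp only [mem_Iic] at hx; linarith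
      nlinarith [Gs_pos x]
    rw [exact_Iic w] at hmono
    refine hmono.trans ?_
    have he : (1:ℝ) ≤ Real.sqrt (2 * Real.pi) * Real.exp 1 := by
      nlinarith [Real.exp_one_gt_d9]
    nlinarith [Gs_pos w]
  · have hle : ∫ x in Iic w, Gs x ≤ ∫ x, Gs x := by
      refine setIntegral_le_integral ((int_pow_gauss 0).congr
        (Filter.Eventually.of_forall (by intro x; simp)))
        (Filter.Eventually.of_forall (fun x ↦ (Gs_pos x).le))
    rw [gauss_total] at hle
    refine hle.trans ?_
    have : (1:ℝ) ≤ Real.exp 1 * Gs w := by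
      rw [Gs, ← Real.exp_add]
      refine Real.one_le_exp ?_
      nlinarith
    nlinarith [Real.sqrt_nonneg (2 * Real.pi)]

lemma tail_Ioi {w : ℝ} (hw : 0 ≤ w) :
    ∫ x in Ioi w, Gs x ≤ Real.sqrt (2 * Real.pi) * Real.exp 1 * Gs w := by
  have h2 : ∀ x : ℝ, Gs (-x) = Gs x := by intro x; simp [Gs]
  have h := integral_comp_neg_Ioi w Gs
  have : ∫ x in Ioi w, Gs x = ∫ x in Iic (-w), Gs x := by
    rw [← h]; exact setIntegral_congr_fun measurableSet_Ioi (fun x _ ↦ (h2 x).symm)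
  rw [this, ← h2 w]
  exact tail_Iic (by linarith)


lemma key (k : ℝ → ℝ) (hk : Measurable k)
    (hint : ∀ m : ℕ, Integrable (fun x ↦ x ^ m * (k x * Gs x)))
    (h0 : (∫ x, k x * Gs x) = 0) (n : ℕ) :
    Integrable (fun w ↦ w ^ n * ∫ x in Iic w, k x * Gs x) ∧
    (∫ w, w ^ n * ∫ x in Iic w, k x * Gs x)
      = -(∫ x, x ^ (n+1) * (k x * Gs x)) / ((n : ℝ) + 1) := by
  set G : ℝ → ℝ := fun x ↦ k x * Gs x with hG
  have hGmeas : Measurable G := hk.mul measurable_Gs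
  have hGint : Integrable G := by simpa using hint 0
  set F : ℝ → ℝ := fun w ↦ ∫ x in Iic w, G x with hF
  have hFIoi : ∀ w, (∫ x in Ioi w, G x) = -F w := by
    intro w
    have := intervalIntegral.integral_Iic_add_Ioi (b := w) hGint.integrableOn hGint.integrableOn
    rw [h0] at this
    linarith [this]
  have hDint : Integrable (fun x ↦ |x| ^ (n+1) * |G x|) := by
    refine (hint (n+1)).abs.congr (Filter.Eventually.of_forall fun x ↦ ?_)
    simp only [hG, abs_mul, abs_pow]
  ------------------------------------------------------------------
  -- NEGATIVE HALF
  ------------------------------------------------------------------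
  have neg_half :
      IntegrableOn (fun w ↦ w ^ n * F w) (Iio 0) ∧
      (∫ w in Iio 0, w ^ n * F w) = ∫ x in Iio 0, (-x ^ (n+1) / ((n:ℝ)+1)) * G x := by
    set μ : Measure ℝ := volume.restrict (Iio (0:ℝ)) with hμ
    set u : ℝ → ℝ → ℝ := fun x w ↦ (Ici x).indicator (fun w ↦ G x * w ^ n) w with hu
    have huncurry : Function.uncurry u =
        {q : ℝ × ℝ | q.1 ≤ q.2}.indicator (fun q ↦ G q.1 * q.2 ^ n) := by
      funext p
      simp only [Function.uncurry, hu, Set.indicator_apply, Set.mem_Ici, Set.mem_setOf_eq]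
    have hmeas_u : AEStronglyMeasurable (Function.uncurry u) (μ.prod μ) := by
      rw [huncurry]
      exact (Measurable.indicator
        ((hGmeas.comp measurable_fst).mul (measurable_snd.pow_const n))
        (measurableSet_le measurable_fst measurable_snd)).aestronglyMeasurable
    have h_inner : ∀ x : ℝ, Integrable (fun w ↦ u x w) μ := by
      intro x
      rw [hu]
      simp only
      rw [integrable_indicator_iff measurableSet_Ici, IntegrableOn, hμ,
        Measure.restrict_restrict measurableSet_Ici, Ici_inter_Iio]
      exact ((continuous_const.mul (continuous_pow n)).integrableOn_Icc).mono_set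
        Ico_subset_Icc_self
    have h_norm_eq : ∀ x : ℝ, (∫ w, ‖u x w‖ ∂μ) = ∫ w in Ico x 0, ‖G x * w ^ n‖ := by
      intro x
      calc (∫ w, ‖u x w‖ ∂μ)
          = ∫ w, (Ici x).indicator (fun w ↦ ‖G x * w ^ n‖) w ∂μ := by
            congr 1; funext w; rw [hu]; simp only
            rw [norm_indicator_eq_indicator_norm]
        _ = ∫ w in Ici x, ‖G x * w ^ n‖ ∂μ := integral_indicator measurableSet_Ici
        _ = ∫ w in Ico x 0, ‖G x * w ^ n‖ := by
            rw [hμ, Measure.restrict_restrict measurableSet_Ici, Ici_inter_Iio]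
    have h_norm : Integrable (fun x ↦ ∫ w, ‖u x w‖ ∂μ) μ := by
      refine Integrable.mono' (g := fun x ↦ |x| ^ (n+1) * |G x|) hDint.integrableOn
        (hmeas_u.norm.integral_prod_right') ?_
      rw [hμ]
      filter_upwards [ae_restrict_mem measurableSet_Iio] with x hx
      rw [Real.norm_eq_abs, h_norm_eq x, abs_of_nonneg (integral_nonneg fun w ↦ norm_nonneg _)]
      have hb : (∫ w in Ico x 0, ‖G x * w ^ n‖) ≤ ∫ w in Ico x 0, |G x| * |x| ^ n := by
        refine setIntegral_mono_on ?_ ?_ measurableSet_Ico ?_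
        · exact (((continuous_const.mul (continuous_pow n)).norm).integrableOn_Icc).mono_set
            Ico_subset_Icc_self
        · exact (integrableOn_const measure_Ico_lt_top.ne)
        · intro w hw
          rw [norm_mul, Real.norm_eq_abs, Real.norm_eq_abs, abs_pow]
          have : |w| ≤ |x| := by
            rw [mem_Ico] at hw
            rw [abs_of_nonpos (le_of_lt hw.2), abs_of_nonpos (hw.1.trans (le_of_lt hw.2))]
            linarith [hw.1]
          exact mul_le_mul_of_nonneg_left (pow_le_pow_left₀ (abs_nonneg w) this n) (abs_nonneg _)
      refine hb.trans ?_
      rw [setIntegral_const, measureReal_def, Real.volume_Ico, smul_eq_mul]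
      have hx0 : x < 0 := hx
      rw [ENNReal.toReal_ofReal (by linarith)]
      have : (0 : ℝ) - x = |x| := by rw [abs_of_nonpos (le_of_lt hx0)]; ring
      rw [this, pow_succ]
      ring_nf
      exact le_refl _
    have hu_int : Integrable (Function.uncurry u) (μ.prod μ) :=
      (integrable_prod_iff hmeas_u).mpr ⟨Filter.Eventually.of_forall h_inner, h_norm⟩
    have hswap := integral_integral_swap hu_int
    -- inner integral in w (for all x < 0)
    have hXin : ∀ x : ℝ, x < 0 → (∫ w, u x w ∂μ) = (-x ^ (n+1) / ((n:ℝ)+1)) * G x := by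
      intro x hx
      rw [hu]
      simp only
      rw [integral_indicator measurableSet_Ici, hμ,
        Measure.restrict_restrict measurableSet_Ici, Ici_inter_Iio,
        integral_const_mul]
      have : (∫ w in Ico x 0, w ^ n) = ∫ w in x..(0:ℝ), w ^ n := by
        rw [intervalIntegral.integral_of_le (le_of_lt hx), integral_Ico_eq_integral_Ioo,
          integral_Ioc_eq_integral_Ioo]
      rw [this, integral_pow]
      push_cast
      ring
    -- inner integral in x (for all w < 0)
    have hWin : ∀ w : ℝ, w < 0 → (∫ x, u x w ∂μ) = w ^ n * F w := by
      intro w hw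
      have hfun : (fun x ↦ u x w) = (Iic w).indicator (fun x ↦ G x * w ^ n) := by
        funext x
        rw [hu]
        simp only [Set.indicator_apply, Set.mem_Ici, Set.mem_Iic]
      have hss : Iic w ∩ Iio 0 = Iic w :=
        Set.inter_eq_left.mpr (fun y hy ↦ lt_of_le_of_lt hy hw)
      rw [hfun, integral_indicator measurableSet_Iic, hμ,
        Measure.restrict_restrict measurableSet_Iic, hss,
        integral_mul_const, hF]
      ring
    constructor
    · have h1 : Integrable (fun w ↦ ∫ x, u x w ∂μ) μ := by
        have := (hu_int.swap).integral_prod_left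
        exact this.congr (Filter.Eventually.of_forall fun w ↦ by rfl)
      refine (h1.congr ?_)
      rw [hμ]
      filter_upwards [ae_restrict_mem measurableSet_Iio] with w hw
      exact hWin w hw
    · calc (∫ w in Iio 0, w ^ n * F w)
          = ∫ w, (∫ x, u x w ∂μ) ∂μ := by
            rw [hμ]
            refine (setIntegral_congr_fun measurableSet_Iio fun w hw ↦ ?_).symm
            exact hWin w hw
        _ = ∫ x, (∫ w, u x w ∂μ) ∂μ := hswap.symm
        _ = ∫ x in Iio 0, (-x ^ (n+1) / ((n:ℝ)+1)) * G x := by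
            rw [hμ]
            exact setIntegral_congr_fun measurableSet_Iio fun x hx ↦ hXin x hx
  ------------------------------------------------------------------
  -- POSITIVE HALF
  ------------------------------------------------------------------
  have pos_half :
      IntegrableOn (fun w ↦ w ^ n * F w) (Ici 0) ∧
      (∫ w in Ici 0, w ^ n * F w) = -∫ x in Ioi 0, (x ^ (n+1) / ((n:ℝ)+1)) * G x := by
    set ν : Measure ℝ := volume.restrict (Ioi (0:ℝ)) with hν
    set μ' : Measure ℝ := volume.restrict (Ici (0:ℝ)) with hμ'
    set v : ℝ → ℝ → ℝ := fun x w ↦ (Iio x).indicator (fun w ↦ G x * w ^ n) w with hv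
    have hvuncurry : Function.uncurry v =
        {q : ℝ × ℝ | q.2 < q.1}.indicator (fun q ↦ G q.1 * q.2 ^ n) := by
      funext p
      simp only [Function.uncurry, hv, Set.indicator_apply, Set.mem_Iio, Set.mem_setOf_eq]
    have hmeas_v : AEStronglyMeasurable (Function.uncurry v) (ν.prod μ') := by
      rw [hvuncurry]
      exact (Measurable.indicator
        ((hGmeas.comp measurable_fst).mul (measurable_snd.pow_const n))
        (measurableSet_lt measurable_snd measurable_fst)).aestronglyMeasurable
    have h_inner : ∀ x : ℝ, Integrable (fun w ↦ v x w) μ' := by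
      intro x
      rw [hv]
      simp only
      rw [integrable_indicator_iff measurableSet_Iio, IntegrableOn, hμ',
        Measure.restrict_restrict measurableSet_Iio, Set.inter_comm, Ici_inter_Iio]
      exact ((continuous_const.mul (continuous_pow n)).integrableOn_Icc).mono_set
        Ico_subset_Icc_self
    have h_norm_eq : ∀ x : ℝ, (∫ w, ‖v x w‖ ∂μ') = ∫ w in Ico 0 x, ‖G x * w ^ n‖ := by
      intro x
      calc (∫ w, ‖v x w‖ ∂μ')
          = ∫ w, (Iio x).indicator (fun w ↦ ‖G x * w ^ n‖) w ∂μ' := by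
            congr 1; funext w; rw [hv]; simp only
            rw [norm_indicator_eq_indicator_norm]
        _ = ∫ w in Iio x, ‖G x * w ^ n‖ ∂μ' := integral_indicator measurableSet_Iio
        _ = ∫ w in Ico 0 x, ‖G x * w ^ n‖ := by
            rw [hμ', Measure.restrict_restrict measurableSet_Iio, Set.inter_comm, Ici_inter_Iio]
    have h_norm : Integrable (fun x ↦ ∫ w, ‖v x w‖ ∂μ') ν := by
      refine Integrable.mono' (g := fun x ↦ |x| ^ (n+1) * |G x|) hDint.integrableOn
        (hmeas_v.norm.integral_prod_right') ?_
      rw [hν]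
      filter_upwards [ae_restrict_mem measurableSet_Ioi] with x hx
      rw [Real.norm_eq_abs, h_norm_eq x, abs_of_nonneg (integral_nonneg fun w ↦ norm_nonneg _)]
      have hb : (∫ w in Ico 0 x, ‖G x * w ^ n‖) ≤ ∫ w in Ico 0 x, |G x| * |x| ^ n := by
        refine setIntegral_mono_on ?_ ?_ measurableSet_Ico ?_
        · exact (((continuous_const.mul (continuous_pow n)).norm).integrableOn_Icc).mono_set
            Ico_subset_Icc_self
        · exact (integrableOn_const measure_Ico_lt_top.ne)
        · intro w hw
          rw [norm_mul, Real.norm_eq_abs, Real.norm_eq_abs, abs_pow]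
          have : |w| ≤ |x| := by
            rw [mem_Ico] at hw
            rw [abs_of_nonneg hw.1, abs_of_nonneg ((hw.1).trans (le_of_lt hw.2))]
            linarith [hw.2]
          exact mul_le_mul_of_nonneg_left (pow_le_pow_left₀ (abs_nonneg w) this n) (abs_nonneg _)
      refine hb.trans ?_
      rw [setIntegral_const, measureReal_def, Real.volume_Ico, smul_eq_mul]
      have hx0 : 0 < x := hx
      rw [ENNReal.toReal_ofReal (by linarith)]
      have : x - 0 = |x| := by rw [abs_of_nonneg (le_of_lt hx0)]; ring
      rw [this, pow_succ]
      ring_nf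
      exact le_refl _
    have hv_int : Integrable (Function.uncurry v) (ν.prod μ') :=
      (integrable_prod_iff hmeas_v).mpr ⟨Filter.Eventually.of_forall h_inner, h_norm⟩
    have hswap := integral_integral_swap hv_int
    have hXin : ∀ x : ℝ, 0 < x → (∫ w, v x w ∂μ') = (x ^ (n+1) / ((n:ℝ)+1)) * G x := by
      intro x hx
      rw [hv]
      simp only
      rw [integral_indicator measurableSet_Iio, hμ',
        Measure.restrict_restrict measurableSet_Iio, Set.inter_comm, Ici_inter_Iio,
        integral_const_mul]
      have : (∫ w in Ico 0 x, w ^ n) = ∫ w in (0:ℝ)..x, w ^ n := by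
        rw [intervalIntegral.integral_of_le (le_of_lt hx), integral_Ico_eq_integral_Ioo,
          integral_Ioc_eq_integral_Ioo]
      rw [this, integral_pow]
      push_cast
      ring
    have hWin : ∀ w : ℝ, 0 ≤ w → (∫ x, v x w ∂ν) = -(w ^ n * F w) := by
      intro w hw
      have hfun : (fun x ↦ v x w) = (Ioi w).indicator (fun x ↦ G x * w ^ n) := by
        funext x
        rw [hv]
        simp only [Set.indicator_apply, Set.mem_Iio, Set.mem_Ioi]
      have hss : Ioi w ∩ Ioi 0 = Ioi w :=
        Set.inter_eq_left.mpr (fun y hy ↦ lt_of_le_of_lt hw hy)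
      rw [hfun, integral_indicator measurableSet_Ioi, hν,
        Measure.restrict_restrict measurableSet_Ioi, hss,
        integral_mul_const, hFIoi w]
      ring
    constructor
    · have h1 : Integrable (fun w ↦ ∫ x, v x w ∂ν) μ' := by
        have := (hv_int.swap).integral_prod_left
        exact this.congr (Filter.Eventually.of_forall fun w ↦ by rfl)
      refine ((h1.neg).congr ?_)
      rw [hμ']
      filter_upwards [ae_restrict_mem measurableSet_Ici] with w hw
      simp only [Pi.neg_apply]
      rw [hWin w hw]; ring
    · calc (∫ w in Ici 0, w ^ n * F w)
          = ∫ w, (-∫ x, v x w ∂ν) ∂μ' := by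
            rw [hμ']
            refine (setIntegral_congr_fun measurableSet_Ici fun w hw ↦ ?_).symm
            rw [hWin w hw]; ring
        _ = -∫ w, (∫ x, v x w ∂ν) ∂μ' := integral_neg _
        _ = -∫ x, (∫ w, v x w ∂μ') ∂ν := by rw [hswap]
        _ = -∫ x in Ioi 0, (x ^ (n+1) / ((n:ℝ)+1)) * G x := by
            rw [hν]
            congr 1
            exact setIntegral_congr_fun measurableSet_Ioi fun x hx ↦ hXin x hx
  ------------------------------------------------------------------
  -- COMBINE
  ------------------------------------------------------------------
  have hInt : Integrable (fun w ↦ w ^ n * F w) := by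
    rw [← integrableOn_univ, ← Iio_union_Ici (a := (0:ℝ))]
    exact neg_half.1.union pos_half.1
  refine ⟨hInt, ?_⟩
  have hPint : Integrable (fun x ↦ (x ^ (n+1) / ((n:ℝ)+1)) * G x) := by
    refine ((hint (n+1)).div_const ((n:ℝ)+1)).congr (Filter.Eventually.of_forall fun x ↦ ?_)
    ring
  calc (∫ w, w ^ n * F w)
      = (∫ w in Iio 0, w ^ n * F w) + ∫ w in Ici 0, w ^ n * F w :=
        (intervalIntegral.integral_Iio_add_Ici neg_half.1 pos_half.1).symm
    _ = (∫ x in Iio 0, (-x ^ (n+1) / ((n:ℝ)+1)) * G x)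
        - ∫ x in Ioi 0, (x ^ (n+1) / ((n:ℝ)+1)) * G x := by
        rw [neg_half.2, pos_half.2]; ring
    _ = -((∫ x in Iio 0, (x ^ (n+1) / ((n:ℝ)+1)) * G x)
        + ∫ x in Ici 0, (x ^ (n+1) / ((n:ℝ)+1)) * G x) := by
        rw [integral_Ici_eq_integral_Ioi]
        rw [show (∫ x in Iio 0, (-x ^ (n+1) / ((n:ℝ)+1)) * G x)
          = -∫ x in Iio 0, (x ^ (n+1) / ((n:ℝ)+1)) * G x by
            rw [← integral_neg]
            exact setIntegral_congr_fun measurableSet_Iio fun x _ ↦ by ring]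
        ring
    _ = -∫ x, (x ^ (n+1) / ((n:ℝ)+1)) * G x := by
        rw [intervalIntegral.integral_Iio_add_Ici hPint.integrableOn hPint.integrableOn]
    _ = -(∫ x, x ^ (n+1) * G x) / ((n : ℝ) + 1) := by
        rw [show (fun x ↦ (x ^ (n+1) / ((n:ℝ)+1)) * G x)
          = (fun x ↦ (((n:ℝ)+1))⁻¹ * (x ^ (n+1) * G x)) by funext x; ring]
        rw [integral_const_mul]
        field_simp


lemma int_growth (k : ℝ → ℝ) (hk : Measurable k) (B : ℝ)
    (hB : ∀ x, |k x| ≤ B * (1 + |x|)) (m : ℕ) :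
    Integrable (fun x ↦ x ^ m * (k x * Gs x)) := by
  have hB0 : 0 ≤ B := by have := (abs_nonneg (k 0)).trans (hB 0); simpa using this
  refine Integrable.mono' (g := fun x ↦ B * (|x| ^ m * Gs x + |x| ^ (m+1) * Gs x))
    (((int_abs_pow_gauss m).add (int_abs_pow_gauss (m+1))).const_mul B)
    (((measurable_id.pow_const m).mul
      (hk.mul measurable_Gs)).aestronglyMeasurable)
    (Filter.Eventually.of_forall fun x ↦ ?_)
  rw [Real.norm_eq_abs, abs_mul, abs_mul, abs_pow, abs_of_pos (Gs_pos x)]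
  have h1 : |x| ^ m * (|k x| * Gs x) ≤ |x| ^ m * ((B * (1 + |x|)) * Gs x) := by
    have := mul_le_mul_of_nonneg_right (hB x) (Gs_pos x).le
    exact mul_le_mul_of_nonneg_left this (by positivity)
  calc |x| ^ m * (|k x| * Gs x) ≤ |x| ^ m * ((B * (1 + |x|)) * Gs x) := h1
    _ = B * (|x| ^ m * Gs x + |x| ^ (m+1) * Gs x) := by ring

lemma cont_F (k : ℝ → ℝ) (hki : Integrable (fun x ↦ k x * Gs x)) :
    Continuous (fun w ↦ ∫ x in Iic w, k x * Gs x) := by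
  have heq : ∀ w : ℝ, (∫ x in Iic w, k x * Gs x)
      = (∫ x in Iic 0, k x * Gs x) + ∫ x in (0:ℝ)..w, k x * Gs x := by
    intro w
    have := intervalIntegral.integral_Iic_sub_Iic (a := (0:ℝ)) (b := w)
      hki.integrableOn hki.integrableOn
    linarith
  have : Continuous (fun w : ℝ ↦ (∫ x in Iic 0, k x * Gs x) + ∫ x in (0:ℝ)..w, k x * Gs x) :=
    continuous_const.add (intervalIntegral.continuous_primitive
      (fun a b ↦ hki.intervalIntegrable) 0)
  exact this.congr (fun w ↦ (heq w).symm)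

lemma Fbound (k : ℝ → ℝ) (hk : Measurable k) (B : ℝ) (hB : ∀ x, |k x| ≤ B)
    (h0 : (∫ x, k x * Gs x) = 0) (w : ℝ) :
    |∫ x in Iic w, k x * Gs x| ≤ B * (Real.sqrt (2 * Real.pi) * Real.exp 1) * Gs w := by
  have hB0 : 0 ≤ B := (abs_nonneg (k 0)).trans (hB 0)
  have hki : Integrable (fun x ↦ k x * Gs x) := by
    have := int_growth k hk B (fun x ↦ (hB x).trans (by nlinarith [abs_nonneg x])) 0
    simpa using this
  have main : ∀ s : Set ℝ, MeasurableSet s → (∫ x in s, Gs x) ≤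
      Real.sqrt (2 * Real.pi) * Real.exp 1 * Gs w →
      |∫ x in s, k x * Gs x| ≤ B * (Real.sqrt (2 * Real.pi) * Real.exp 1) * Gs w := by
    intro s hs htail
    have h1 : |∫ x in s, k x * Gs x| ≤ ∫ x in s, |k x * Gs x| := by
      have := norm_integral_le_integral_norm (μ := volume.restrict s)
        (f := fun x ↦ k x * Gs x)
      simpa only [Real.norm_eq_abs] using this
    have h2 : (∫ x in s, |k x * Gs x|) ≤ ∫ x in s, B * Gs x := by
      refine setIntegral_mono_on (hki.abs.integrableOn)
        (((int_pow_gauss 0).congr (Filter.Eventually.of_forall (by intro x; simp))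
          |>.const_mul B).integrableOn) hs (fun x _ ↦ ?_)
      rw [abs_mul, abs_of_pos (Gs_pos x)]
      exact mul_le_mul_of_nonneg_right (hB x) (Gs_pos x).le
    have h3 : (∫ x in s, B * Gs x) = B * ∫ x in s, Gs x := integral_const_mul B _
    calc |∫ x in s, k x * Gs x| ≤ ∫ x in s, |k x * Gs x| := h1
      _ ≤ B * ∫ x in s, Gs x := by rw [← h3]; exact h2
      _ ≤ B * (Real.sqrt (2 * Real.pi) * Real.exp 1 * Gs w) :=
          mul_le_mul_of_nonneg_left htail hB0
      _ = B * (Real.sqrt (2 * Real.pi) * Real.exp 1) * Gs w := by ring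
  rcases le_or_gt w 0 with hw | hw
  · exact main (Iic w) measurableSet_Iic (tail_Iic hw)
  · have hflip : (∫ x in Iic w, k x * Gs x) = -∫ x in Ioi w, k x * Gs x := by
      have := intervalIntegral.integral_Iic_add_Ioi (b := w)
        hki.integrableOn hki.integrableOn
      rw [h0] at this; linarith
    rw [hflip, abs_neg]
    exact main (Ioi w) measurableSet_Ioi (tail_Ioi hw.le)


/-- **Gaussian expectation of the twice-iterated Stein equation solution.**
Let `Z ~ N(0,1)`, `h : ℝ → ℝ` bounded measurable, `c = E[h(Z)]`, let `f` be the bounded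
solution of the Stein equation `f'(w) - w f(w) = h(w) - c`, let `f' = h - c + w f(w)` be its
derivative, `c' = E[f'(Z)]`, and let `g` be the bounded solution of the Stein equation
`g'(w) - w g(w) = f'(w) - c'`. Then `E[g(Z)] = (1/3) E[(Z³ - 3Z) h(Z)]`. -/
theorem gaussian_expectation_iterated_stein_solution
    (h : ℝ → ℝ) (hm : Measurable h) (M : ℝ) (hM : ∀ x, |h x| ≤ M)
    (c : ℝ) (hc : c = ∫ x, h x * (Real.exp (-x ^ 2 / 2) / Real.sqrt (2 * Real.pi)))
    (f : ℝ → ℝ)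
    (hf : ∀ w, f w = Real.exp (w ^ 2 / 2) * ∫ x in Set.Iic w, (h x - c) * Real.exp (-x ^ 2 / 2))
    (f' : ℝ → ℝ) (hf' : ∀ w, f' w = h w - c + w * f w)
    (c' : ℝ) (hc' : c' = ∫ x, f' x * (Real.exp (-x ^ 2 / 2) / Real.sqrt (2 * Real.pi)))
    (g : ℝ → ℝ)
    (hg : ∀ w, g w = Real.exp (w ^ 2 / 2) *
      ∫ x in Set.Iic w, (f' x - c') * Real.exp (-x ^ 2 / 2)) :
    ∫ w, g w * (Real.exp (-w ^ 2 / 2) / Real.sqrt (2 * Real.pi))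
      = (1 / 3) * ∫ w, (w ^ 3 - 3 * w) * h w * (Real.exp (-w ^ 2 / 2) / Real.sqrt (2 * Real.pi)) := by
  simp only [← Gs_def] at hc hf hc' hg ⊢
  set S : ℝ := Real.sqrt (2 * Real.pi) with hS
  have hSpos : 0 < S := Real.sqrt_pos.mpr (by positivity)
  have hM0 : 0 ≤ M := (abs_nonneg (h 0)).trans (hM 0)
  -- level 1
  set k₁ : ℝ → ℝ := fun x ↦ h x - c with hk₁def
  have hk₁ : Measurable k₁ := hm.sub measurable_const
  have hb₁ : ∀ x, |k₁ x| ≤ (M + |c|) := fun x ↦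
    (abs_sub (h x) c).trans (by have := hM x; linarith)
  have hb₁' : ∀ x, |k₁ x| ≤ (M + |c|) * (1 + |x|) := fun x ↦
    (hb₁ x).trans (by nlinarith [abs_nonneg x, abs_nonneg c, abs_nonneg (k₁ x), (abs_nonneg (k₁ x)).trans (hb₁ x)])
  have hint₁ : ∀ m : ℕ, Integrable (fun x ↦ x ^ m * (k₁ x * Gs x)) :=
    int_growth k₁ hk₁ (M + |c|) hb₁'
  have hhGs : ∀ m : ℕ, Integrable (fun x ↦ x ^ m * (h x * Gs x)) :=
    int_growth h hm M (fun x ↦ (hM x).trans (by nlinarith [abs_nonneg x]))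
  have hhGs0 : Integrable (fun x ↦ h x * Gs x) := by simpa using hhGs 0
  have hGsint : Integrable Gs := by simpa using int_pow_gauss 0
  have hcS : (∫ x, h x * Gs x) = c * S := by
    rw [hc]
    have : (∫ x, h x * (Gs x / S)) = (∫ x, (h x * Gs x) * S⁻¹) := by
      congr 1; funext x; ring
    rw [this, integral_mul_const]
    field_simp
  have hzero₁ : (∫ x, k₁ x * Gs x) = 0 := by
    have : (∫ x, k₁ x * Gs x) = (∫ x, h x * Gs x) - c * ∫ x, Gs x := by
      rw [← integral_const_mul, ← integral_sub hhGs0 (hGsint.const_mul c)]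
      congr 1; funext x; rw [hk₁def]; ring
    rw [this, hcS, gauss_total, ← hS]
    ring
  have hkey₁ := key k₁ hk₁ hint₁ hzero₁
  set F₁ : ℝ → ℝ := fun w ↦ ∫ x in Iic w, k₁ x * Gs x with hF₁
  have hfF : ∀ w, f w * Gs w = F₁ w := by
    intro w
    rw [hf w, hF₁]
    simp only
    rw [mul_comm (Real.exp (w ^ 2 / 2)) _, mul_assoc, Gs_def, ← Real.exp_add,
      show w ^ 2 / 2 + -w ^ 2 / 2 = 0 by ring, Real.exp_zero, mul_one]
  have hcontF₁ : Continuous F₁ := cont_F k₁ (by simpa using hint₁ 0)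
  have hfmeas : Measurable f := by
    have : f = fun w ↦ Real.exp (w ^ 2 / 2) * F₁ w := funext hf
    rw [this]
    fun_prop
  -- bound on f
  set Bf : ℝ := (M + |c|) * (S * Real.exp 1) with hBf
  have hfb : ∀ w, |f w| ≤ Bf := by
    intro w
    rw [hf w]
    rw [abs_mul, abs_of_pos (Real.exp_pos _)]
    have h1 := Fbound k₁ hk₁ (M + |c|) hb₁ hzero₁ w
    have h2 : Real.exp (w ^ 2 / 2) * |∫ x in Iic w, k₁ x * Gs x|
        ≤ Real.exp (w ^ 2 / 2) * ((M + |c|) * (S * Real.exp 1) * Gs w) :=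
      mul_le_mul_of_nonneg_left h1 (Real.exp_pos _).le
    refine h2.trans_eq ?_
    rw [Gs_def, hBf]
    rw [show Real.exp (w ^ 2 / 2) * ((M + |c|) * (S * Real.exp 1) * Real.exp (-w ^ 2 / 2))
      = (M + |c|) * (S * Real.exp 1) * (Real.exp (w ^ 2 / 2) * Real.exp (-w ^ 2 / 2)) by ring,
      ← Real.exp_add, show w ^ 2 / 2 + -w ^ 2 / 2 = 0 by ring, Real.exp_zero, mul_one]
  have hBf0 : 0 ≤ Bf := (abs_nonneg (f 0)).trans (hfb 0)
  -- level 2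
  have hf'meas : Measurable f' := by
    have : f' = fun w ↦ h w - c + w * f w := funext hf'
    rw [this]
    exact (hm.sub measurable_const).add (measurable_id.mul hfmeas)
  set k₂ : ℝ → ℝ := fun x ↦ f' x - c' with hk₂def
  have hk₂ : Measurable k₂ := hf'meas.sub measurable_const
  have hb₂ : ∀ x, |k₂ x| ≤ (M + |c| + |c'| + Bf) * (1 + |x|) := by
    intro x
    rw [hk₂def]
    simp only
    rw [hf' x]
    have h1 : |h x - c + x * f x - c'| ≤ |h x| + |c| + |x| * |f x| + |c'| := by
      calc |h x - c + x * f x - c'| ≤ |h x - c + x * f x| + |c'| := abs_sub _ _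
        _ ≤ |h x - c| + |x * f x| + |c'| := by linarith [abs_add_le (h x - c) (x * f x)]
        _ ≤ |h x| + |c| + |x| * |f x| + |c'| := by
            rw [abs_mul]; linarith [abs_sub (h x) c]
    refine h1.trans ?_
    have := hM x
    have := hfb x
    have hx := abs_nonneg x
    nlinarith [abs_nonneg (f x), abs_nonneg c, abs_nonneg c']
  have hint₂ : ∀ m : ℕ, Integrable (fun x ↦ x ^ m * (k₂ x * Gs x)) :=
    int_growth k₂ hk₂ _ hb₂
  have hf'int : Integrable (fun x ↦ f' x * Gs x) := by
    have hb : ∀ x, |f' x| ≤ (M + |c| + |c'| + Bf + |c'|) * (1 + |x|) := by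
      intro x
      have h1 : |f' x| ≤ |k₂ x| + |c'| := by
        rw [hk₂def]
        simp only
        calc |f' x| = |(f' x - c') + c'| := by ring_nf
          _ ≤ |f' x - c'| + |c'| := abs_add_le _ _
      refine h1.trans ?_
      have := hb₂ x
      nlinarith [abs_nonneg x, abs_nonneg c']
    have := int_growth f' hf'meas _ hb 0
    simpa using this
  have hc'S : (∫ x, f' x * Gs x) = c' * S := by
    rw [hc']
    have : (∫ x, f' x * (Gs x / S)) = (∫ x, (f' x * Gs x) * S⁻¹) := by
      congr 1; funext x; ring
    rw [this, integral_mul_const]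
    field_simp
  have hzero₂ : (∫ x, k₂ x * Gs x) = 0 := by
    have : (∫ x, k₂ x * Gs x) = (∫ x, f' x * Gs x) - c' * ∫ x, Gs x := by
      rw [← integral_const_mul, ← integral_sub hf'int (hGsint.const_mul c')]
      congr 1; funext x; rw [hk₂def]; ring
    rw [this, hc'S, gauss_total, ← hS]
    ring
  have hkey₂ := key k₂ hk₂ hint₂ hzero₂ 0
  set F₂ : ℝ → ℝ := fun w ↦ ∫ x in Iic w, k₂ x * Gs x with hF₂
  have hgF : ∀ w, g w * Gs w = F₂ w := by
    intro w
    rw [hg w, hF₂]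
    simp only
    rw [mul_comm (Real.exp (w ^ 2 / 2)) _, mul_assoc, Gs_def, ← Real.exp_add,
      show w ^ 2 / 2 + -w ^ 2 / 2 = 0 by ring, Real.exp_zero, mul_one]
  -- LHS
  have hLHS : (∫ w, g w * (Gs w / S)) = S⁻¹ * ∫ w, w ^ 0 * F₂ w := by
    rw [← integral_const_mul]
    congr 1; funext w
    rw [pow_zero, one_mul, ← hgF w]
    ring
  -- compute ∫ x^1 * (k₂ x * Gs x)
  have hsplit : (∫ x, x ^ 1 * (k₂ x * Gs x))
      = (∫ x, x ^ 1 * ((h x - c - c') * Gs x)) + ∫ w, w ^ 2 * F₁ w := by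
    have hintA : Integrable (fun x ↦ x ^ 1 * ((h x - c - c') * Gs x)) := by
      refine int_growth _ ((hm.sub measurable_const).sub measurable_const) (M + |c| + |c'|) ?_ 1
      intro x
      simp only [Pi.sub_apply]
      have := hM x
      have h1 : |h x - c - c'| ≤ |h x| + |c| + |c'| := by
        calc |h x - c - c'| ≤ |h x - c| + |c'| := abs_sub _ _
          _ ≤ |h x| + |c| + |c'| := by linarith [abs_sub (h x) c]
      nlinarith [abs_nonneg x, abs_nonneg c, abs_nonneg c', abs_nonneg (h x)]
    have hintB : Integrable (fun w ↦ w ^ 2 * F₁ w) := (key k₁ hk₁ hint₁ hzero₁ 2).1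
    rw [← integral_add hintA hintB]
    congr 1; funext x
    have : f x * Gs x = F₁ x := hfF x
    rw [hk₂def]
    simp only
    rw [hf' x, ← this]
    ring
  have hxF₁ : (∫ w, w ^ 2 * F₁ w) = -(∫ x, x ^ 3 * (k₁ x * Gs x)) / 3 := by
    have := (key k₁ hk₁ hint₁ hzero₁ 2).2
    rw [this]
    norm_num
  have hx3k₁ : (∫ x, x ^ 3 * (k₁ x * Gs x)) = ∫ x, x ^ 3 * (h x * Gs x) := by
    have : (∫ x, x ^ 3 * (k₁ x * Gs x))
        = (∫ x, x ^ 3 * (h x * Gs x)) - c * ∫ x, x ^ 3 * Gs x := by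
      rw [← integral_const_mul, ← integral_sub (hhGs 3) ((int_pow_gauss 3).const_mul c)]
      congr 1; funext x; rw [hk₁def]; ring
    rw [this, gauss_odd 3 (by decide)]
    ring
  have hxA : (∫ x, x ^ 1 * ((h x - c - c') * Gs x)) = ∫ x, x ^ 1 * (h x * Gs x) := by
    have : (∫ x, x ^ 1 * ((h x - c - c') * Gs x))
        = (∫ x, x ^ 1 * (h x * Gs x)) - (c + c') * ∫ x, x ^ 1 * Gs x := by
      rw [← integral_const_mul, ← integral_sub (hhGs 1) ((int_pow_gauss 1).const_mul (c + c'))]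
      congr 1; funext x; ring
    rw [this, gauss_odd 1 (by decide)]
    ring
  -- RHS
  have hRHS : (∫ w, (w ^ 3 - 3 * w) * h w * (Gs w / S))
      = S⁻¹ * ((∫ x, x ^ 3 * (h x * Gs x)) - 3 * ∫ x, x ^ 1 * (h x * Gs x)) := by
    have e1 : (∫ x, (x ^ 3 - 3 * x) * h x * (Gs x / S))
        = ∫ x, S⁻¹ * (x ^ 3 * (h x * Gs x) - 3 * (x ^ 1 * (h x * Gs x))) := by
      congr 1; funext x; ring
    rw [e1, integral_const_mul, integral_sub (hhGs 3) ((hhGs 1).const_mul 3),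
      integral_const_mul]
  rw [hLHS, hkey₂.2, hRHS, hsplit, hxF₁, hx3k₁, hxA]
  push_cast
  ring
end

section
/- Let h : ℝ → ℝ be bounded and measurable, let P : ℝ → ℝ be a polynomial, let σ > 0, let Z ~ N(0,1), and define h_1(x) = E[h(σZ + x)·P(Z)] for x ∈ ℝ. Then for every integer k ≥ 0, h_1 is k times differentiable on ℝ and there is a constant C_{P,k}, depending only on P and k (not on h, σ, or x), such that |h_1^{(k)}(x)| ≤ C_{P,k}·‖h‖_∞/σ^k for all x ∈ ℝ. -/
open MeasureTheory ProbabilityTheory Real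
open scoped ENNReal NNReal

noncomputable def gsKer (P : Polynomial ℝ) (y : ℝ) : ℝ := P.eval y * Real.exp (-y^2/2)

noncomputable def gsT (P : Polynomial ℝ) : Polynomial ℝ :=
  Polynomial.X * P - Polynomial.derivative P

lemma gsKer_continuous (P : Polynomial ℝ) : Continuous (gsKer P) := by
  unfold gsKer; fun_prop

lemma gsKer_hasDerivAt (P : Polynomial ℝ) (y : ℝ) :
    HasDerivAt (gsKer P) (-gsKer (gsT P) y) y := by
  have h1 := P.hasDerivAt y
  have h3 : HasDerivAt (fun y : ℝ => -y^2/2) (-y) y := by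
    have := ((hasDerivAt_pow 2 y).neg).div_const 2
    refine this.congr_deriv ?_
    norm_num
    ring
  have h2 := h3.exp
  have := h1.mul h2
  refine this.congr_deriv ?_
  simp only [gsKer, gsT, Polynomial.eval_sub, Polynomial.eval_mul, Polynomial.eval_X]
  ring

lemma gs_pow_le (x : ℝ) (hx : 0 ≤ x) (n : ℕ) : x^n ≤ n.factorial * Real.exp x := by
  have h := Real.sum_le_exp_of_nonneg hx (n+1)
  have h2 : x^n / n.factorial ≤ ∑ i ∈ Finset.range (n+1), x^i / i.factorial :=
    Finset.single_le_sum (f := fun i => x^i / i.factorial)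
      (fun i _ => by positivity) (Finset.self_mem_range_succ n)
  have h3 := h2.trans h
  have hf : (0:ℝ) < n.factorial := by positivity
  rw [div_le_iff₀ hf] at h3
  linarith [h3]

lemma gsPolyBound (P : Polynomial ℝ) : ∃ C : ℝ, 0 ≤ C ∧ ∀ y : ℝ, |P.eval y| ≤ C * Real.exp |y| := by
  induction P using Polynomial.induction_on' with
  | add p q hp hq =>
    obtain ⟨C, hC, h⟩ := hp; obtain ⟨D, hD, h'⟩ := hq
    refine ⟨C + D, by positivity, fun y => ?_⟩
    rw [Polynomial.eval_add]
    calc |p.eval y + q.eval y| ≤ |p.eval y| + |q.eval y| := abs_add_le _ _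
      _ ≤ C * Real.exp |y| + D * Real.exp |y| := add_le_add (h y) (h' y)
      _ = (C + D) * Real.exp |y| := by ring
  | monomial n a =>
    refine ⟨|a| * n.factorial, by positivity, fun y => ?_⟩
    rw [Polynomial.eval_monomial, abs_mul, abs_pow]
    calc |a| * |y|^n ≤ |a| * (n.factorial * Real.exp |y|) := by
          exact mul_le_mul_of_nonneg_left (gs_pow_le _ (abs_nonneg y) n) (abs_nonneg a)
      _ = |a| * n.factorial * Real.exp |y| := by ring

lemma gsKer_bound (P : Polynomial ℝ) : ∃ C : ℝ, 0 ≤ C ∧ ∀ s u : ℝ, |u| ≤ 1 →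
    |gsKer P (s - u)| ≤ C * Real.exp (2*|s| - s^2/2) := by
  obtain ⟨C, hC, h⟩ := gsPolyBound P
  refine ⟨C * Real.exp 1, by positivity, fun s u hu => ?_⟩
  have h1 : |gsKer P (s - u)| = |P.eval (s-u)| * Real.exp (-(s-u)^2/2) := by
    rw [gsKer, abs_mul, Real.abs_exp]
  rw [h1]
  have h2 : |P.eval (s-u)| ≤ C * Real.exp (|s| + 1) := by
    refine (h (s-u)).trans ?_
    refine mul_le_mul_of_nonneg_left (Real.exp_le_exp.mpr ?_) hC
    calc |s - u| ≤ |s| + |u| := abs_sub _ _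
      _ ≤ |s| + 1 := by linarith
  have h3 : Real.exp (-(s-u)^2/2) ≤ Real.exp (|s| - s^2/2) := by
    refine Real.exp_le_exp.mpr ?_
    have hsu : s * u ≤ |s| := by
      calc s * u ≤ |s * u| := le_abs_self _
        _ = |s| * |u| := abs_mul _ _
        _ ≤ |s| * 1 := mul_le_mul_of_nonneg_left hu (abs_nonneg s)
        _ = |s| := mul_one _
    nlinarith [sq_nonneg u]
  calc |P.eval (s-u)| * Real.exp (-(s-u)^2/2)
      ≤ (C * Real.exp (|s| + 1)) * Real.exp (|s| - s^2/2) := by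
        refine mul_le_mul h2 h3 (Real.exp_nonneg _) (by positivity)
    _ = C * Real.exp 1 * Real.exp (2*|s| - s^2/2) := by
        rw [mul_assoc, ← Real.exp_add, mul_assoc, ← Real.exp_add]
        ring_nf

lemma gs_comp_affine {G : ℝ → ℝ} (hG : Integrable G) {σ : ℝ} (hσ : σ ≠ 0) (x : ℝ) :
    Integrable (fun t : ℝ => G ((t - x)/σ)) := by
  have h1 : Integrable (fun t : ℝ => G (t / σ)) := hG.comp_div hσ
  have h2 := (measurePreserving_add_right (volume : Measure ℝ) (-x)).integrable_comp_emb
      (MeasurableEquiv.addRight (-x)).measurableEmbedding (g := fun t : ℝ => G (t / σ))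
  have h3 : Integrable ((fun t : ℝ => G (t / σ)) ∘ (fun t : ℝ => t + (-x))) := h2.mpr h1
  have : (fun t : ℝ => G ((t - x)/σ)) = (fun t : ℝ => G (t / σ)) ∘ (fun t : ℝ => t + (-x)) := by
    funext t; simp [sub_eq_add_neg]
  rw [this]; exact h3

lemma gs_integral_scale (G : ℝ → ℝ) {σ : ℝ} (hσ : 0 < σ) (x : ℝ) :
    ∫ y : ℝ, G (σ * y + x) = σ⁻¹ * ∫ t : ℝ, G t := by
  have h1 : (fun y : ℝ => G (σ * y + x)) = fun y : ℝ => (fun u : ℝ => G (u + x)) (σ * y) := rfl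
  rw [h1, MeasureTheory.Measure.integral_comp_mul_left (fun u : ℝ => G (u + x)) σ,
    integral_add_right_eq_self (μ := volume) G x, smul_eq_mul,
    abs_of_pos (inv_pos.mpr hσ)]

lemma gs_integral_unscale (G : ℝ → ℝ) {σ : ℝ} (hσ : 0 < σ) (x : ℝ) :
    ∫ t : ℝ, G ((t - x)/σ) = σ * ∫ s : ℝ, G s := by
  have h := gs_integral_scale (fun t : ℝ => G ((t - x)/σ)) hσ x
  have h2 : (fun y : ℝ => (fun t : ℝ => G ((t - x)/σ)) (σ * y + x)) = G := by
    funext y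
    simp only []
    rw [add_sub_cancel_right, mul_div_cancel_left₀ _ hσ.ne']
  rw [h2] at h
  rw [h, ← mul_assoc, mul_inv_cancel₀ hσ.ne', one_mul]

lemma gs_dom_integrable : Integrable (fun s : ℝ => Real.exp (2*|s| - s^2/2)) := by
  have base : Integrable (fun s : ℝ => Real.exp (-(2⁻¹) * s^2)) :=
    integrable_exp_neg_mul_sq (by norm_num)
  have shift : ∀ c : ℝ, Integrable (fun s : ℝ => Real.exp (-(2⁻¹) * (s - c)^2)) := by
    intro c
    have h2 := (measurePreserving_add_right (volume : Measure ℝ) (-c)).integrable_comp_emb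
        (MeasurableEquiv.addRight (-c)).measurableEmbedding
        (g := fun s : ℝ => Real.exp (-(2⁻¹) * s^2))
    have h3 := h2.mpr base
    have : (fun s : ℝ => Real.exp (-(2⁻¹) * (s - c)^2))
        = (fun s : ℝ => Real.exp (-(2⁻¹) * s^2)) ∘ (fun s : ℝ => s + (-c)) := by
      funext s; simp [sub_eq_add_neg]
    rw [this]; exact h3
  have hsum : Integrable (fun s : ℝ =>
      Real.exp 2 * Real.exp (-(2⁻¹) * (s - 2)^2) + Real.exp 2 * Real.exp (-(2⁻¹) * (s + 2)^2)) := by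
    have h4 := shift (-2)
    simp only [sub_neg_eq_add] at h4
    exact ((shift 2).const_mul _).add (h4.const_mul _)
  refine hsum.mono' ((Real.continuous_exp.comp (by continuity)).aestronglyMeasurable) (Filter.Eventually.of_forall fun s => ?_)
  rw [Real.norm_eq_abs, abs_of_nonneg (Real.exp_nonneg _)]
  rcases le_or_gt 0 s with hs | hs
  · have h5 : Real.exp (2*|s| - s^2/2) = Real.exp 2 * Real.exp (-(2⁻¹) * (s - 2)^2) := by
      rw [← Real.exp_add, abs_of_nonneg hs]; ring_nf
    rw [h5]
    have := Real.exp_nonneg (-(2⁻¹) * (s + 2)^2)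
    nlinarith [Real.exp_pos (2:ℝ)]
  · have h5 : Real.exp (2*|s| - s^2/2) = Real.exp 2 * Real.exp (-(2⁻¹) * (s + 2)^2) := by
      rw [← Real.exp_add, abs_of_neg hs]; ring_nf
    rw [h5]
    have := Real.exp_nonneg (-(2⁻¹) * (s - 2)^2)
    nlinarith [Real.exp_pos (2:ℝ)]

/-- **Smoothing by Gaussian convolution, bounds on derivatives.**
For a polynomial `P` and `k ∈ ℕ`, there is a constant `C` depending only on `P` and `k`
such that for every bounded measurable `h : ℝ → ℝ` with `|h| ≤ M`, every `σ > 0`, the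
function `h₁(x) = E[h(σZ + x) P(Z)]` (with `Z ~ N(0,1)`) is `k` times differentiable and
`|h₁⁽ᵏ⁾(x)| ≤ C M / σᵏ` for all `x`. -/
theorem gaussian_smoothing_deriv_bound (P : Polynomial ℝ) (k : ℕ) :
    ∃ C : ℝ, ∀ h : ℝ → ℝ, Measurable h → ∀ M : ℝ, (∀ x, |h x| ≤ M) →
      ∀ σ : ℝ, 0 < σ →
      ContDiff ℝ k (fun x => ∫ y, P.eval y * h (σ * y + x) ∂(gaussianReal 0 1)) ∧
      ∀ x : ℝ,
        |iteratedDeriv k (fun x => ∫ y, P.eval y * h (σ * y + x) ∂(gaussianReal 0 1)) x|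
          ≤ C * M / σ ^ k := by
  refine ⟨(Real.sqrt (2*Real.pi))⁻¹ * ∫ s : ℝ, |gsKer (gsT^[k] P) s|, ?_⟩
  intro h hmeas M hM σ hσ
  have hM0 : 0 ≤ M := (abs_nonneg _).trans (hM 0)
  have hKi : ∀ R : Polynomial ℝ, Integrable (gsKer R) := by
    intro R
    obtain ⟨C, hC, hB⟩ := gsKer_bound R
    refine (gs_dom_integrable.const_mul C).mono' (gsKer_continuous R).aestronglyMeasurable
      (Filter.Eventually.of_forall fun s => ?_)
    have := hB s 0 (by norm_num)
    simpa [Real.norm_eq_abs] using this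
  have hSSint : ∀ (R : Polynomial ℝ) (x : ℝ),
      Integrable (fun t : ℝ => gsKer R ((t - x)/σ) * h t) := by
    intro R x
    have := (gs_comp_affine (hKi R) hσ.ne' x).bdd_mul hmeas.aestronglyMeasurable
      (Filter.Eventually.of_forall fun t => by rw [Real.norm_eq_abs]; exact hM t)
    simpa [mul_comm] using this
  have hptderiv : ∀ (R : Polynomial ℝ) (x t : ℝ),
      HasDerivAt (fun x => gsKer R ((t - x)/σ) * h t)
        (σ⁻¹ * (gsKer (gsT R) ((t - x)/σ) * h t)) x := by
    intro R x t
    have h₁ : HasDerivAt (fun x : ℝ => (t - x)/σ) (-1/σ) x :=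
      ((hasDerivAt_id x).const_sub t).div_const σ
    have h₂ := (gsKer_hasDerivAt R ((t - x)/σ)).comp x h₁
    have h₃ := h₂.mul_const (h t)
    refine h₃.congr_deriv ?_
    ring
  have hderiv : ∀ (R : Polynomial ℝ) (x₀ : ℝ),
      HasDerivAt (fun x => ∫ t : ℝ, gsKer R ((t - x)/σ) * h t)
        (σ⁻¹ * ∫ t : ℝ, gsKer (gsT R) ((t - x₀)/σ) * h t) x₀ := by
    intro R x₀
    obtain ⟨C, hC, hB⟩ := gsKer_bound (gsT R)
    have lipsch : ∀ t : ℝ, LipschitzOnWith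
        (Real.nnabs (σ⁻¹ * C * M * Real.exp (2*|(t - x₀)/σ| - ((t - x₀)/σ)^2/2)))
        (fun x => gsKer R ((t - x)/σ) * h t) (Metric.ball x₀ σ) := by
      intro t
      apply Convex.lipschitzOnWith_of_nnnorm_hasDerivWithin_le (convex_ball x₀ σ)
        (f' := fun x => σ⁻¹ * (gsKer (gsT R) ((t - x)/σ) * h t))
        (fun x _ => (hptderiv R x t).hasDerivWithinAt)
      intro x hx
      rw [← NNReal.coe_le_coe, coe_nnnorm, Real.coe_nnabs, Real.norm_eq_abs]
      have hs : (t - x)/σ = (t - x₀)/σ - (x - x₀)/σ := by ring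
      have hu : |(x - x₀)/σ| ≤ 1 := by
        rw [Metric.mem_ball, Real.dist_eq] at hx
        rw [abs_div, abs_of_pos hσ, div_le_one hσ]
        exact hx.le
      have hb := hB ((t - x₀)/σ) ((x - x₀)/σ) hu
      rw [← hs] at hb
      have hbnd0 : 0 ≤ σ⁻¹ * C * M * Real.exp (2*|(t - x₀)/σ| - ((t - x₀)/σ)^2/2) := by
        positivity
      rw [abs_of_nonneg hbnd0, abs_mul, abs_mul, abs_of_pos (inv_pos.mpr hσ)]
      calc σ⁻¹ * (|gsKer (gsT R) ((t - x)/σ)| * |h t|)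
          ≤ σ⁻¹ * (C * Real.exp (2*|(t - x₀)/σ| - ((t - x₀)/σ)^2/2) * M) := by
            refine mul_le_mul_of_nonneg_left ?_ (inv_pos.mpr hσ).le
            exact mul_le_mul hb (hM t) (abs_nonneg _) (by positivity)
        _ = σ⁻¹ * C * M * Real.exp (2*|(t - x₀)/σ| - ((t - x₀)/σ)^2/2) := by ring
    have bint : Integrable (fun t : ℝ =>
        σ⁻¹ * C * M * Real.exp (2*|(t - x₀)/σ| - ((t - x₀)/σ)^2/2)) := by
      have := gs_comp_affine gs_dom_integrable hσ.ne' x₀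
      exact this.const_mul _
    have hFmeas : ∀ x : ℝ, AEStronglyMeasurable (fun t : ℝ => gsKer R ((t - x)/σ) * h t)
        (volume : Measure ℝ) := by
      intro x
      exact (((gsKer_continuous R).measurable.comp
        ((measurable_id.sub_const x).div_const σ)).mul hmeas).aestronglyMeasurable
    have hF'meas : AEStronglyMeasurable
        (fun t : ℝ => σ⁻¹ * (gsKer (gsT R) ((t - x₀)/σ) * h t)) (volume : Measure ℝ) :=
      ((((gsKer_continuous (gsT R)).measurable.comp
        ((measurable_id.sub_const x₀).div_const σ)).mul hmeas).const_mul σ⁻¹).aestronglyMeasurable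
    have main := hasDerivAt_integral_of_dominated_loc_of_lip (s := Metric.ball x₀ σ) (Metric.ball_mem_nhds x₀ hσ)
      (Filter.Eventually.of_forall hFmeas) (hSSint R x₀) hF'meas
      (Filter.Eventually.of_forall lipsch) bint
      (Filter.Eventually.of_forall fun t => hptderiv R x₀ t)
    have key := main.2
    rwa [MeasureTheory.integral_const_mul] at key
  have hCD : ∀ (n : ℕ) (R : Polynomial ℝ),
      ContDiff ℝ n (fun x => ∫ t : ℝ, gsKer R ((t - x)/σ) * h t) := by
    intro n
    induction n with
    | zero =>
      intro R
      rw [show ((0:ℕ) : WithTop ℕ∞) = 0 from rfl, contDiff_zero]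
      exact continuous_iff_continuousAt.mpr fun x => ((hderiv R x).differentiableAt).continuousAt
    | succ n ih =>
      intro R
      have hcast : ((n+1 : ℕ) : WithTop ℕ∞) = (n : WithTop ℕ∞) + 1 := by norm_cast
      rw [hcast, contDiff_succ_iff_deriv]
      refine ⟨fun x => (hderiv R x).differentiableAt, ?_, ?_⟩
      · intro hn; exact absurd hn (by simp)
      · have hdeq : deriv (fun x => ∫ t : ℝ, gsKer R ((t - x)/σ) * h t)
            = fun x => σ⁻¹ * ∫ t : ℝ, gsKer (gsT R) ((t - x)/σ) * h t :=
          funext fun x => (hderiv R x).deriv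
        rw [hdeq]
        exact contDiff_const.mul (ih (gsT R))
  have hiter : ∀ (n : ℕ) (R : Polynomial ℝ),
      iteratedDeriv n (fun x => ∫ t : ℝ, gsKer R ((t - x)/σ) * h t)
        = fun x => (σ⁻¹)^n * ∫ t : ℝ, gsKer (gsT^[n] R) ((t - x)/σ) * h t := by
    intro n
    induction n with
    | zero =>
      intro R; funext x; simp [iteratedDeriv_zero]
    | succ n ih =>
      intro R
      rw [iteratedDeriv_succ']
      have hdeq : deriv (fun x => ∫ t : ℝ, gsKer R ((t - x)/σ) * h t)
          = fun x => σ⁻¹ * ∫ t : ℝ, gsKer (gsT R) ((t - x)/σ) * h t :=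
        funext fun x => (hderiv R x).deriv
      rw [hdeq]
      funext x
      have hconst : iteratedDeriv n
            (fun x => σ⁻¹ * ∫ t : ℝ, gsKer (gsT R) ((t - x)/σ) * h t) x
          = σ⁻¹ * iteratedDeriv n
            (fun x => ∫ t : ℝ, gsKer (gsT R) ((t - x)/σ) * h t) x := by
        rw [← iteratedDerivWithin_univ, ← iteratedDerivWithin_univ]
        exact iteratedDerivWithin_const_mul (Set.mem_univ x) uniqueDiffOn_univ σ⁻¹
          ((hCD n (gsT R)).contDiffWithinAt)
      rw [hconst, congrFun (ih (gsT R)) x, Function.iterate_succ_apply]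
      ring
  have hbound : ∀ (R : Polynomial ℝ) (x : ℝ),
      |∫ t : ℝ, gsKer R ((t - x)/σ) * h t| ≤ σ * (∫ s : ℝ, |gsKer R s|) * M := by
    intro R x
    have h1 : |∫ t : ℝ, gsKer R ((t - x)/σ) * h t| ≤ ∫ t : ℝ, |gsKer R ((t - x)/σ) * h t| := by
      simpa only [Real.norm_eq_abs] using
        norm_integral_le_integral_norm (μ := (volume : Measure ℝ))
          (fun t : ℝ => gsKer R ((t - x)/σ) * h t)
    refine h1.trans ?_
    have h2 : ∫ t : ℝ, |gsKer R ((t - x)/σ) * h t| ≤ ∫ t : ℝ, |gsKer R ((t - x)/σ)| * M := by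
      refine integral_mono (hSSint R x).abs
        ((gs_comp_affine (hKi R).abs hσ.ne' x).mul_const M) fun t => ?_
      rw [abs_mul]
      exact mul_le_mul_of_nonneg_left (hM t) (abs_nonneg _)
    refine h2.trans ?_
    rw [MeasureTheory.integral_mul_const,
      gs_integral_unscale (fun s : ℝ => |gsKer R s|) hσ x]
  have hrepr : (fun x => ∫ y, P.eval y * h (σ * y + x) ∂(gaussianReal 0 1))
      = fun x => (Real.sqrt (2*Real.pi))⁻¹ * σ⁻¹ * ∫ t : ℝ, gsKer P ((t - x)/σ) * h t := by
    funext x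
    have hmeq : (gaussianReal 0 1)
        = (volume : Measure ℝ).withDensity
            (fun y => ((Real.toNNReal (gaussianPDFReal 0 1 y) : ℝ≥0) : ℝ≥0∞)) := by
      rw [gaussianReal_of_var_ne_zero 0 one_ne_zero]; rfl
    rw [hmeq, integral_withDensity_eq_integral_smul (measurable_gaussianPDFReal 0 1).real_toNNReal]
    have hpdf : ∀ y : ℝ, ((gaussianPDFReal 0 1 y).toNNReal : ℝ)
        = (Real.sqrt (2*Real.pi))⁻¹ * Real.exp (-y^2/2) := by
      intro y
      rw [Real.coe_toNNReal _ (gaussianPDFReal_nonneg 0 1 y)]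
      simp only [gaussianPDFReal, NNReal.coe_one, mul_one, sub_zero]
    calc ∫ y, ((gaussianPDFReal 0 1 y).toNNReal : ℝ≥0) • (P.eval y * h (σ * y + x))
        = ∫ y, (Real.sqrt (2*Real.pi))⁻¹ * (gsKer P y * h (σ * y + x)) := by
          congr 1; funext y
          rw [NNReal.smul_def, smul_eq_mul, hpdf y, gsKer]; ring
      _ = (Real.sqrt (2*Real.pi))⁻¹ * ∫ y, gsKer P y * h (σ * y + x) :=
          MeasureTheory.integral_const_mul _ _
      _ = (Real.sqrt (2*Real.pi))⁻¹ * (σ⁻¹ * ∫ t : ℝ, gsKer P ((t - x)/σ) * h t) := by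
          congr 1
          have hsc := gs_integral_scale (fun t : ℝ => gsKer P ((t - x)/σ) * h t) hσ x
          have heq : (fun y : ℝ => (fun t : ℝ => gsKer P ((t - x)/σ) * h t) (σ * y + x))
              = fun y => gsKer P y * h (σ * y + x) := by
            funext y
            simp only []
            rw [add_sub_cancel_right, mul_div_cancel_left₀ _ hσ.ne']
          rw [heq] at hsc
          exact hsc
      _ = (Real.sqrt (2*Real.pi))⁻¹ * σ⁻¹ * ∫ t : ℝ, gsKer P ((t - x)/σ) * h t := by ring
  constructor
  · rw [hrepr]
    exact contDiff_const.mul (hCD k P)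
  · intro x
    rw [hrepr]
    have hconst : iteratedDeriv k
          (fun x => (Real.sqrt (2*Real.pi))⁻¹ * σ⁻¹ * ∫ t : ℝ, gsKer P ((t - x)/σ) * h t) x
        = (Real.sqrt (2*Real.pi))⁻¹ * σ⁻¹ * iteratedDeriv k
          (fun x => ∫ t : ℝ, gsKer P ((t - x)/σ) * h t) x := by
      rw [← iteratedDerivWithin_univ, ← iteratedDerivWithin_univ]
      have : (fun x => (Real.sqrt (2*Real.pi))⁻¹ * σ⁻¹ * ∫ t : ℝ, gsKer P ((t - x)/σ) * h t)
          = fun x => ((Real.sqrt (2*Real.pi))⁻¹ * σ⁻¹) * ∫ t : ℝ, gsKer P ((t - x)/σ) * h t := rfl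
      rw [this]
      exact iteratedDerivWithin_const_mul (Set.mem_univ x) uniqueDiffOn_univ
        ((Real.sqrt (2*Real.pi))⁻¹ * σ⁻¹) ((hCD k P).contDiffWithinAt)
    rw [hconst, congrFun (hiter k P) x]
    set I : ℝ := ∫ s : ℝ, |gsKer (gsT^[k] P) s| with hI
    have hI0 : 0 ≤ I := integral_nonneg fun s => abs_nonneg _
    have hb := hbound (gsT^[k] P) x
    have ha : (0:ℝ) ≤ (Real.sqrt (2*Real.pi))⁻¹ := by positivity
    have habs : |(Real.sqrt (2*Real.pi))⁻¹ * σ⁻¹ *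
          ((σ⁻¹)^k * ∫ t : ℝ, gsKer (gsT^[k] P) ((t - x)/σ) * h t)|
        = (Real.sqrt (2*Real.pi))⁻¹ * σ⁻¹ *
          ((σ⁻¹)^k * |∫ t : ℝ, gsKer (gsT^[k] P) ((t - x)/σ) * h t|) := by
      rw [abs_mul, abs_mul, abs_mul, abs_pow, abs_of_nonneg ha,
        abs_of_pos (inv_pos.mpr hσ)]
    rw [habs]
    calc (Real.sqrt (2*Real.pi))⁻¹ * σ⁻¹ *
          ((σ⁻¹)^k * |∫ t : ℝ, gsKer (gsT^[k] P) ((t - x)/σ) * h t|)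
        ≤ (Real.sqrt (2*Real.pi))⁻¹ * σ⁻¹ * ((σ⁻¹)^k * (σ * I * M)) := by
          refine mul_le_mul_of_nonneg_left (mul_le_mul_of_nonneg_left hb ?_) ?_
          · positivity
          · positivity
      _ = (Real.sqrt (2*Real.pi))⁻¹ * I * M / σ ^ k := by
          field_simp
          rw [mul_comm, ← mul_assoc, ← mul_assoc, ← mul_pow, mul_one_div_cancel hσ.ne', one_pow, one_mul]
end

section
/- Let h : ℝ → ℝ be bounded and measurable, let P : ℝ → ℝ be a polynomial, let Z ~ N(0,1), and define h_2(σ) = E[h(σZ)·P(Z)] for σ > 0. Then for every integer k ≥ 0, h_2 is k times differentiable on (0,∞) and there is a constant C̃_{P,k}, depending only on P and k (not on h or σ), such that |h_2^{(k)}(σ)| ≤ C̃_{P,k}·‖h‖_∞/σ^k for all σ > 0. -/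
open MeasureTheory ProbabilityTheory Real Filter Set
open scoped ENNReal NNReal

namespace GaussDilAux


/-- The "Stein" operator on polynomials. -/
noncomputable def T (Q : Polynomial ℝ) : Polynomial ℝ :=
  (Polynomial.X ^ 2 - 1) * Q - Polynomial.X * Q.derivative

lemma T_eval (Q : Polynomial ℝ) (t : ℝ) :
    (T Q).eval t = (t ^ 2 - 1) * Q.eval t - t * Q.derivative.eval t := by
  simp [T]

/-- Iterated polynomials arising in higher derivatives. -/
noncomputable def R (P : Polynomial ℝ) : ℕ → Polynomial ℝ
  | 0 => P
  | k + 1 => T (R P k) - (k : ℝ) • R P k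

lemma poly_abs_le (Q : Polynomial ℝ) (t : ℝ) :
    |Q.eval t| ≤ ∑ i ∈ Finset.range (Q.natDegree + 1), |Q.coeff i| * |t| ^ i := by
  conv_lhs => rw [Polynomial.eval_eq_sum_range]
  refine (Finset.abs_sum_le_sum_abs _ _).trans ?_
  refine Finset.sum_le_sum fun i _ => ?_
  rw [abs_mul, abs_pow]

lemma integrable_pow_mul_exp {b : ℝ} (hb : 0 < b) (n : ℕ) :
    Integrable (fun x : ℝ => x ^ n * Real.exp (-b * x ^ 2)) := by
  have := integrable_rpow_mul_exp_neg_mul_sq hb (s := (n : ℝ))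
    (by exact_mod_cast neg_one_lt_zero.trans_le (Nat.cast_nonneg n) : (-1 : ℝ) < n)
  simpa [Real.rpow_natCast] using this

lemma integrable_abs_pow_mul_exp {b : ℝ} (hb : 0 < b) (n : ℕ) :
    Integrable (fun x : ℝ => |x| ^ n * Real.exp (-b * x ^ 2)) := by
  refine (((integrable_exp_neg_mul_sq hb).add
    (integrable_pow_mul_exp hb (2 * n))).mono' ?_ ?_)
  · exact ((measurable_id.abs.pow measurable_const).mul
      (((measurable_id.pow measurable_const).const_mul (-b)).exp)).aestronglyMeasurable
  · refine Filter.Eventually.of_forall fun x => ?_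
    have he : (0:ℝ) < Real.exp (-b * x ^ 2) := Real.exp_pos _
    have habs : |x| ^ n ≤ 1 + x ^ (2 * n) := by
      rcases le_total (|x|) 1 with hx | hx
      · have : |x| ^ n ≤ 1 := pow_le_one₀ (abs_nonneg x) hx
        have h2 : (0:ℝ) ≤ x ^ (2 * n) := Even.pow_nonneg (even_two_mul n) x
        linarith
      · have h1 : |x| ^ n ≤ |x| ^ (2 * n) :=
          pow_le_pow_right₀ hx (by omega)
        have h2 : |x| ^ (2 * n) = x ^ (2 * n) := by
          rw [← abs_pow, abs_of_nonneg (Even.pow_nonneg (even_two_mul n) x)]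
        calc |x| ^ n ≤ x ^ (2*n) := h2 ▸ h1
        _ ≤ 1 + x ^ (2*n) := by linarith
    have : ‖|x| ^ n * Real.exp (-b * x ^ 2)‖ = |x| ^ n * Real.exp (-b * x ^ 2) := by
      rw [Real.norm_eq_abs, abs_of_nonneg (by positivity)]
    rw [this]
    calc |x| ^ n * Real.exp (-b * x ^ 2) ≤ (1 + x ^ (2*n)) * Real.exp (-b * x^2) :=
      mul_le_mul_of_nonneg_right habs he.le
    _ = Real.exp (-b * x ^ 2) + x ^ (2*n) * Real.exp (-b * x ^ 2) := by ring

lemma gaussianPDFReal_def' (t : ℝ) :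
    gaussianPDFReal 0 1 t = (Real.sqrt (2 * π))⁻¹ * Real.exp (-t ^ 2 / 2) := by
  simp [gaussianPDFReal, one_div]



lemma gauss_withDensity :
    gaussianReal 0 1 =
      (volume : Measure ℝ).withDensity fun x => ((gaussianPDFReal 0 1 x).toNNReal : ℝ≥0∞) := by
  rw [gaussianReal_of_var_ne_zero 0 one_ne_zero, gaussianPDF_def]
  simp only [ENNReal.ofReal]

lemma integral_gauss (f : ℝ → ℝ) :
    ∫ y, f y ∂(gaussianReal 0 1) = ∫ y, gaussianPDFReal 0 1 y * f y := by
  rw [gauss_withDensity,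
    integral_withDensity_eq_integral_smul ((measurable_gaussianPDFReal 0 1).real_toNNReal) f]
  congr 1
  ext y
  rw [NNReal.smul_def, Real.coe_toNNReal _ (gaussianPDFReal_nonneg 0 1 y), smul_eq_mul]

lemma integrable_gauss_iff (f : ℝ → ℝ) :
    Integrable f (gaussianReal 0 1) ↔
      Integrable (fun y => gaussianPDFReal 0 1 y * f y) volume := by
  rw [gauss_withDensity]
  rw [show ((volume : Measure ℝ).withDensity fun x => ((gaussianPDFReal 0 1 x).toNNReal : ℝ≥0∞))
      = (volume : Measure ℝ).withDensity fun x => ((fun y => (gaussianPDFReal 0 1 y).toNNReal) x : ℝ≥0∞) from rfl,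
    integrable_withDensity_iff_integrable_smul ((measurable_gaussianPDFReal 0 1).real_toNNReal)]
  have : (fun x => (gaussianPDFReal 0 1 x).toNNReal • f x) = fun y => gaussianPDFReal 0 1 y * f y := by
    ext y
    rw [NNReal.smul_def, Real.coe_toNNReal _ (gaussianPDFReal_nonneg 0 1 y), smul_eq_mul]
  rw [this]






/-- The kernel in the Lebesgue representation of the smoothed function. -/
noncomputable def ker (Q : Polynomial ℝ) (σ x : ℝ) : ℝ :=
  σ⁻¹ * ((Real.sqrt (2 * π))⁻¹ * Real.exp (-(x / σ) ^ 2 / 2) * Q.eval (x / σ))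

lemma ker_eq_pdf (Q : Polynomial ℝ) (σ x : ℝ) :
    ker Q σ x = σ⁻¹ * (gaussianPDFReal 0 1 (x / σ) * Q.eval (x / σ)) := by
  rw [ker, gaussianPDFReal_def']

lemma measurable_ker (Q : Polynomial ℝ) (σ : ℝ) : Measurable (ker Q σ) := by
  unfold ker
  fun_prop

lemma ker_hasDerivAt (Q : Polynomial ℝ) (x : ℝ) {σ : ℝ} (hσ : 0 < σ) :
    HasDerivAt (fun s => ker Q s x) (σ⁻¹ * ker (T Q) σ x) σ := by
  have hσ' : σ ≠ 0 := hσ.ne'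
  have hu : HasDerivAt (fun s : ℝ => x / s) (-(x / σ ^ 2)) σ := by
    simpa [div_eq_mul_inv, mul_comm] using (hasDerivAt_inv hσ').const_mul x
  have hQ : HasDerivAt (fun s => Q.eval (x / s))
      (Q.derivative.eval (x / σ) * -(x / σ ^ 2)) σ :=
    (Q.hasDerivAt (x / σ)).comp σ hu
  have hsq : HasDerivAt (fun s : ℝ => -(x / s) ^ 2 / 2)
      (-(2 * (x / σ) ^ 1 * -(x / σ ^ 2)) / 2) σ := ((hu.pow 2).neg).div_const 2
  have hexp : HasDerivAt (fun s => Real.exp (-(x / s) ^ 2 / 2))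
      (Real.exp (-(x / σ) ^ 2 / 2) * (-(2 * (x / σ) ^ 1 * -(x / σ ^ 2)) / 2)) σ := hsq.exp
  have hmain := ((hasDerivAt_inv hσ').fun_mul
    (((hexp.const_mul ((Real.sqrt (2 * π))⁻¹)).fun_mul hQ)))
  refine hmain.congr_deriv ?_
  simp only [ker, T_eval]
  have hs : Real.sqrt (2 * π) ≠ 0 := by positivity
  field_simp
  ring

/-- Dominating function for the kernel, for `σ ∈ [a, b]`. -/
noncomputable def bQ (Q : Polynomial ℝ) (a b x : ℝ) : ℝ :=
  a⁻¹ * ((Real.sqrt (2 * π))⁻¹ * Real.exp (-x ^ 2 / (2 * b ^ 2)) *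
    ∑ i ∈ Finset.range (Q.natDegree + 1), |Q.coeff i| * (|x| / a) ^ i)


lemma ker_abs_le {a b σ : ℝ} (ha : 0 < a) (h1 : a ≤ σ) (h2 : σ ≤ b)
    (Q : Polynomial ℝ) (x : ℝ) : |ker Q σ x| ≤ bQ Q a b x := by
  have hσ : 0 < σ := ha.trans_le h1
  have hb : 0 < b := hσ.trans_le h2
  have habs : |ker Q σ x| = σ⁻¹ * ((Real.sqrt (2 * π))⁻¹ *
      Real.exp (-(x / σ) ^ 2 / 2) * |Q.eval (x / σ)|) := by
    rw [ker, abs_mul, abs_mul, abs_mul, abs_of_pos (by positivity : (0:ℝ) < σ⁻¹),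
      abs_of_pos (by positivity : (0:ℝ) < (Real.sqrt (2 * π))⁻¹),
      abs_of_pos (Real.exp_pos _)]
  rw [habs, bQ]
  have hexp : Real.exp (-(x / σ) ^ 2 / 2) ≤ Real.exp (-x ^ 2 / (2 * b ^ 2)) := by
    apply Real.exp_le_exp.2
    rw [div_pow, neg_div, neg_div, neg_le_neg_iff, div_div]
    exact div_le_div_of_nonneg_left (sq_nonneg x) (by positivity)
      (by nlinarith)
  have hpoly : |Q.eval (x / σ)| ≤
      ∑ i ∈ Finset.range (Q.natDegree + 1), |Q.coeff i| * (|x| / a) ^ i := by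
    refine (poly_abs_le Q (x / σ)).trans (Finset.sum_le_sum fun i _ => ?_)
    have : |x / σ| ≤ |x| / a := by
      rw [abs_div, abs_of_pos hσ]
      exact div_le_div_of_nonneg_left (abs_nonneg x) ha h1
    gcongr
  gcongr <;>
    first
      | positivity
      | exact Finset.sum_nonneg fun i _ => by positivity
      | exact hexp
      | exact hpoly

lemma bQ_nonneg {a b : ℝ} (ha : 0 < a) (Q : Polynomial ℝ) (x : ℝ) : 0 ≤ bQ Q a b x := by
  unfold bQ
  have : 0 ≤ ∑ i ∈ Finset.range (Q.natDegree + 1), |Q.coeff i| * (|x| / a) ^ i :=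
    Finset.sum_nonneg fun i _ => by positivity
  positivity


lemma bQ_integrable {a b : ℝ} (ha : 0 < a) (hb : 0 < b) (Q : Polynomial ℝ) :
    Integrable (bQ Q a b) := by
  have h2b : (0:ℝ) < (2 * b ^ 2)⁻¹ := by positivity
  have key : bQ Q a b = fun x => ∑ i ∈ Finset.range (Q.natDegree + 1),
      (a⁻¹ * (Real.sqrt (2 * π))⁻¹ * |Q.coeff i| * (a⁻¹) ^ i) *
        (|x| ^ i * Real.exp (-(2 * b ^ 2)⁻¹ * x ^ 2)) := by
    ext x
    rw [bQ, Finset.mul_sum, Finset.mul_sum]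
    refine Finset.sum_congr rfl fun i _ => ?_
    rw [show -x ^ 2 / (2 * b ^ 2) = -(2 * b ^ 2)⁻¹ * x ^ 2 by ring]
    ring
  rw [key]
  exact integrable_finset_sum _ fun i _ =>
    (integrable_abs_pow_mul_exp h2b i).const_mul _
















noncomputable def G (h : ℝ → ℝ) (Q : Polynomial ℝ) (σ : ℝ) : ℝ :=
  ∫ y, Q.eval y * h (σ * y) ∂(gaussianReal 0 1)

section withh

variable {h : ℝ → ℝ} {M : ℝ} (hmeas : Measurable h) (hM : ∀ x, |h x| ≤ M)

lemma G_eq (Q : Polynomial ℝ) {σ : ℝ} (hσ : 0 < σ) :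
    G h Q σ = ∫ x, ker Q σ x * h x := by
  rw [G, integral_gauss]
  set F : ℝ → ℝ := fun y => gaussianPDFReal 0 1 y * (Q.eval y * h (σ * y)) with hF
  have key : ∀ x, ker Q σ x * h x = σ⁻¹ * F (x / σ) := by
    intro x
    have hx : σ * (x / σ) = x := by field_simp
    simp only [hF, ker_eq_pdf, hx]
    ring
  calc ∫ y, F y = σ⁻¹ * (|σ| • ∫ y, F y) := by
        rw [abs_of_pos hσ, smul_eq_mul, ← mul_assoc, inv_mul_cancel₀ hσ.ne', one_mul]
    _ = σ⁻¹ * ∫ x, F (x / σ) := by rw [Measure.integral_comp_div F σ]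
    _ = ∫ x, σ⁻¹ * F (x / σ) := (integral_const_mul _ _).symm
    _ = ∫ x, ker Q σ x * h x := by simp_rw [key]

include hmeas hM

lemma integrable_ker_mul (Q : Polynomial ℝ) {σ : ℝ} (hσ : 0 < σ) :
    Integrable (fun x => ker Q σ x * h x) := by
  have hM0 : 0 ≤ M := (abs_nonneg _).trans (hM 0)
  refine ((bQ_integrable hσ hσ Q).mul_const M).mono'
    ((measurable_ker Q σ).mul hmeas).aestronglyMeasurable
    (Filter.Eventually.of_forall fun x => ?_)
  rw [Real.norm_eq_abs, abs_mul]
  exact mul_le_mul (ker_abs_le hσ le_rfl le_rfl Q x) (hM x) (abs_nonneg _)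
    (bQ_nonneg hσ Q x)

lemma integrable_G_integrand (Q : Polynomial ℝ) (σ : ℝ) :
    Integrable (fun y => Q.eval y * h (σ * y)) (gaussianReal 0 1) := by
  have hM0 : 0 ≤ M := (abs_nonneg _).trans (hM 0)
  rw [integrable_gauss_iff]
  refine ((bQ_integrable one_pos one_pos Q).mul_const M).mono'
    ((measurable_gaussianPDFReal 0 1).mul
      ((Q.continuous_aeval.measurable).mul (hmeas.comp (measurable_const_mul σ)))).aestronglyMeasurable
    (Filter.Eventually.of_forall fun y => ?_)
  have hker : gaussianPDFReal 0 1 y * Q.eval y = ker Q 1 y := by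
    rw [ker_eq_pdf]; simp
  rw [Real.norm_eq_abs, show gaussianPDFReal 0 1 y * (Q.eval y * h (σ * y))
      = (gaussianPDFReal 0 1 y * Q.eval y) * h (σ * y) by ring, hker, abs_mul]
  exact mul_le_mul (ker_abs_le one_pos le_rfl le_rfl Q y) (hM _) (abs_nonneg _)
    (bQ_nonneg one_pos Q y)

lemma abs_G_le (Q : Polynomial ℝ) (σ : ℝ) :
    |G h Q σ| ≤ (∫ y, |Q.eval y| ∂(gaussianReal 0 1)) * M := by
  have hM0 : 0 ≤ M := (abs_nonneg _).trans (hM 0)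
  have h1 : Integrable (fun y => Q.eval y * h (σ * y)) (gaussianReal 0 1) :=
    integrable_G_integrand hmeas hM Q σ
  have h2 : Integrable (fun y => |Q.eval y|) (gaussianReal 0 1) := by
    have := integrable_G_integrand (h := fun _ => (1:ℝ)) (M := (1:ℝ))
      measurable_const (fun x => by norm_num) Q σ
    simpa using this.abs
  calc |G h Q σ| ≤ ∫ y, |Q.eval y * h (σ * y)| ∂(gaussianReal 0 1) := by
        have := norm_integral_le_integral_norm
          (μ := gaussianReal 0 1) (fun y => Q.eval y * h (σ * y))
        simp only [Real.norm_eq_abs] at this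
        exact this
    _ ≤ ∫ y, |Q.eval y| * M ∂(gaussianReal 0 1) := by
        refine integral_mono h1.abs (h2.mul_const M) fun y => ?_
        rw [abs_mul]
        exact mul_le_mul_of_nonneg_left (hM _) (abs_nonneg _)
    _ = (∫ y, |Q.eval y| ∂(gaussianReal 0 1)) * M := by rw [integral_mul_const]

lemma G_hasDerivAt (Q : Polynomial ℝ) {σ : ℝ} (hσ : 0 < σ) :
    HasDerivAt (G h Q) (σ⁻¹ * G h (T Q) σ) σ := by
  have hM0 : 0 ≤ M := (abs_nonneg _).trans (hM 0)
  have ha : (0:ℝ) < σ / 2 := by linarith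
  have hb : (0:ℝ) < 2 * σ := by linarith
  have hball : ∀ s ∈ Metric.ball σ (σ / 2), σ / 2 ≤ s ∧ s ≤ 2 * σ := by
    intro s hs
    rw [Metric.mem_ball, Real.dist_eq, abs_sub_lt_iff] at hs
    constructor <;> linarith [hs.1, hs.2]
  have key := hasDerivAt_integral_of_dominated_loc_of_deriv_le
    (F := fun s x => ker Q s x * h x)
    (F' := fun s x => s⁻¹ * ker (T Q) s x * h x)
    (bound := fun x => (σ / 2)⁻¹ * bQ (T Q) (σ / 2) (2 * σ) x * M)
    (μ := volume) (x₀ := σ) (s := Metric.ball σ (σ / 2)) (Metric.ball_mem_nhds σ ha)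
    (Filter.Eventually.of_forall fun s =>
      ((measurable_ker Q s).mul hmeas).aestronglyMeasurable)
    (integrable_ker_mul hmeas hM Q hσ)
    (((measurable_const.mul (measurable_ker (T Q) σ)).mul hmeas).aestronglyMeasurable)
    (Filter.Eventually.of_forall fun x => fun s hs => ?_)
    (((bQ_integrable ha hb (T Q)).const_mul _).mul_const M)
    (Filter.Eventually.of_forall fun x => fun s hs => ?_)
  · have hval : (∫ x, σ⁻¹ * ker (T Q) σ x * h x) = σ⁻¹ * G h (T Q) σ := by
      rw [G_eq (T Q) hσ]
      simp_rw [mul_assoc]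
      exact integral_const_mul _ _
    have hfun : (fun s => ∫ x, ker Q s x * h x) =ᶠ[nhds σ] G h Q := by
      filter_upwards [Ioi_mem_nhds hσ] with s hs
      exact (G_eq Q hs).symm
    exact (hval ▸ key.2).congr_of_eventuallyEq hfun.symm
  · -- bound
    obtain ⟨h1, h2⟩ := hball s hs
    have hs0 : 0 < s := ha.trans_le h1
    rw [Real.norm_eq_abs, abs_mul, abs_mul, abs_inv, abs_of_pos hs0]
    refine mul_le_mul (mul_le_mul ?_ (ker_abs_le ha h1 h2 (T Q) x) (abs_nonneg _)
      (by positivity)) (hM x) (abs_nonneg _) ?_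
    · exact inv_anti₀ ha h1
    · have := bQ_nonneg (b := 2 * σ) ha (T Q) x
      positivity
  · -- differentiability
    obtain ⟨h1, h2⟩ := hball s hs
    have hs0 : 0 < s := ha.trans_le h1
    exact (ker_hasDerivAt Q x hs0).mul_const (h x)

set_option linter.unusedSectionVars false





lemma G_sub_smul (Q : Polynomial ℝ) (k : ℕ) (σ : ℝ) :
    G h (T Q - (k:ℝ) • Q) σ = G h (T Q) σ - (k:ℝ) * G h Q σ := by
  have h1 := integrable_G_integrand hmeas hM (T Q) σ
  have h2 := integrable_G_integrand hmeas hM Q σ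
  unfold G
  simp only [Polynomial.eval_sub, Polynomial.eval_smul, smul_eq_mul, sub_mul, mul_assoc]
  rw [integral_sub h1 ((h2.const_mul _).congr (Filter.Eventually.of_forall fun y => by ring)),
    integral_const_mul]

lemma alg_aux (σ : ℝ) (hσ : σ ≠ 0) (k : ℕ) (A B : ℝ) :
    (σ ^ (k+1))⁻¹ * (B - (k:ℝ) * A)
      = -(↑k * σ ^ (k - 1)) / (σ ^ k) ^ 2 * A + (σ ^ k)⁻¹ * (σ⁻¹ * B) := by
  rcases k with _ | k
  · simp
  · have hk : (k + 1 : ℕ) - 1 = k := rfl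
    rw [hk]
    field_simp
    ring

lemma G_iter (P : Polynomial ℝ) : ∀ k : ℕ, ∀ σ ∈ Ioi (0:ℝ),
    iteratedDerivWithin k (G h P) (Ioi 0) σ = (σ ^ k)⁻¹ * G h (R P k) σ := by
  intro k
  induction k with
  | zero => intro σ _; simp [R]
  | succ k ih =>
    intro σ hσ
    have hσ0 : 0 < σ := hσ
    have hud : UniqueDiffWithinAt ℝ (Ioi (0:ℝ)) σ := (uniqueDiffOn_Ioi 0) σ hσ
    rw [iteratedDerivWithin_succ,
      derivWithin_congr (fun s hs => ih s hs) (ih σ hσ)]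
    have hder : HasDerivAt (fun s => (s ^ k)⁻¹ * G h (R P k) s)
        ((σ ^ (k+1))⁻¹ * G h (R P (k+1)) σ) σ := by
      have hpow := (hasDerivAt_pow k σ).inv (pow_ne_zero k hσ0.ne')
      have hmul := hpow.fun_mul (G_hasDerivAt hmeas hM (R P k) hσ0)
      refine hmul.congr_deriv ?_
      rw [show R P (k+1) = T (R P k) - (k:ℝ) • R P k from rfl,
        G_sub_smul hmeas hM]
      exact (alg_aux hmeas hM σ hσ0.ne' k _ _).symm
    rw [hder.hasDerivWithinAt.derivWithin hud]

lemma G_contDiffOn : ∀ (n : ℕ) (Q : Polynomial ℝ), ContDiffOn ℝ n (G h Q) (Ioi 0) := by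
  intro n
  induction n with
  | zero =>
    intro Q
    rw [Nat.cast_zero, contDiffOn_zero]
    exact fun σ hσ =>
      ((G_hasDerivAt hmeas hM Q hσ).continuousAt).continuousWithinAt
  | succ n ih =>
    intro Q
    have hc : ((n + 1 : ℕ) : WithTop ℕ∞) = (n : WithTop ℕ∞) + 1 := by push_cast; rfl
    rw [hc]
    refine (contDiffOn_succ_iff_deriv_of_isOpen isOpen_Ioi).2 ⟨?_, ?_, ?_⟩
    · exact fun σ hσ =>
        ((G_hasDerivAt hmeas hM Q hσ).differentiableAt).differentiableWithinAt
    · intro hω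
      exact absurd hω (by simp)
    · have c1 : ContDiffOn ℝ n (fun s : ℝ => s⁻¹) (Ioi 0) :=
        contDiffOn_id.inv (fun s hs => ne_of_gt hs)
      exact (c1.mul (ih (T Q))).congr fun s hs =>
        (G_hasDerivAt hmeas hM Q hs).deriv

end withh


end GaussDilAux

open MeasureTheory ProbabilityTheory

/-- **Smoothing by Gaussian dilation, bounds on derivatives in the scale parameter.**
For a polynomial `P` and `k ∈ ℕ`, there is a constant `C̃` depending only on `P` and `k`
such that for every bounded measurable `h : ℝ → ℝ` with `|h| ≤ M`, the function
`h₂(σ) = E[h(σZ) P(Z)]` (with `Z ~ N(0,1)`) is `k` times differentiable on `(0, ∞)` and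
`|h₂⁽ᵏ⁾(σ)| ≤ C̃ M / σᵏ` for all `σ > 0`. -/
theorem gaussian_dilation_deriv_bound (P : Polynomial ℝ) (k : ℕ) :
    ∃ C : ℝ, ∀ h : ℝ → ℝ, Measurable h → ∀ M : ℝ, (∀ x, |h x| ≤ M) →
      ContDiffOn ℝ k (fun σ => ∫ y, P.eval y * h (σ * y) ∂(gaussianReal 0 1))
        (Set.Ioi (0 : ℝ)) ∧
      ∀ σ : ℝ, 0 < σ →
        |iteratedDerivWithin k (fun σ => ∫ y, P.eval y * h (σ * y) ∂(gaussianReal 0 1))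
            (Set.Ioi (0 : ℝ)) σ|
          ≤ C * M / σ ^ k := by
  classical
  refine ⟨∫ y, |(GaussDilAux.R P k).eval y| ∂(gaussianReal 0 1), fun h hmeas M hM => ⟨?_, ?_⟩⟩
  · exact GaussDilAux.G_contDiffOn hmeas hM k P
  · intro σ hσ
    have key : iteratedDerivWithin k
        (fun σ => ∫ y, P.eval y * h (σ * y) ∂(gaussianReal 0 1)) (Set.Ioi (0:ℝ)) σ
        = (σ ^ k)⁻¹ * GaussDilAux.G h (GaussDilAux.R P k) σ :=
      GaussDilAux.G_iter hmeas hM P k σ hσ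
    rw [key, abs_mul, abs_inv, abs_pow, abs_of_pos hσ, div_eq_mul_inv,
      mul_comm _ ((σ ^ k)⁻¹)]
    exact mul_le_mul_of_nonneg_left (GaussDilAux.abs_G_le hmeas hM (GaussDilAux.R P k) σ)
      (by positivity)
end

section
/- There exists a universal constant C such that the following holds. Let n ≥ 1 and let X_1, …, X_n be i.i.d. Bernoulli(1/2) random variables. Then for every x in the set A_n := {2z/√n − √n : z = 0, 1, …, n} ∩ [−n^{1/4}/8, n^{1/4}/8], |P((2/√n)·Σ_{i=1}^n (X_i − 1/2) = x) − (2/√(2πn))·e^{−x^2/2}| ≤ C·((1 + x^4)/n)·(2/√(2πn))·e^{−x^2/2}. -/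
open MeasureTheory ProbabilityTheory
open scoped ENNReal

section stirlingHelpers
open Real Stirling Filter


lemma sqrt_pi_le_stirlingSeq (m : ℕ) : Real.sqrt π ≤ stirlingSeq (m + 1) := by
  refine le_of_tendsto (tendsto_stirlingSeq_sqrt_pi.comp (tendsto_add_atTop_nat (m + 1))) ?_
  filter_upwards [] with k
  have : k + (m + 1) = (k + m) + 1 := by ring
  show stirlingSeq (k + (m + 1)) ≤ stirlingSeq (m + 1)
  rw [this]
  exact stirlingSeq'_antitone (Nat.le_add_left m k)

lemma stirlingSeq_le (m : ℕ) :
    stirlingSeq (m + 1) ≤ Real.sqrt π * Real.exp (1 / (2 * (m + 1))) := by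
  have key : ∀ j : ℕ, Real.log (stirlingSeq (m + 1)) - Real.log (stirlingSeq (j + (m + 1))) ≤
      1 / (2 * ((m : ℝ) + 1)) - 1 / (2 * ((m : ℝ) + 1 + j)) := by
    intro j
    induction j with
    | zero => simp
    | succ j ih =>
      have step : Real.log (stirlingSeq (m + j + 1)) - Real.log (stirlingSeq (m + j + 2)) ≤
          1 / (4 * ((m + j + 1 : ℕ) : ℝ) ^ 2) := log_stirlingSeq_sub_log_stirlingSeq_succ (m + j + 1)
      have hb : 1 / (4 * (↑(m + j + 1) : ℝ) ^ 2) ≤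
          1 / (2 * ((m : ℝ) + 1 + j)) - 1 / (2 * ((m : ℝ) + 1 + (j+1))) := by
        push_cast
        rw [div_sub_div _ _ (by positivity) (by positivity),
          div_le_div_iff₀ (by positivity) (by positivity)]
        ring_nf
        nlinarith [sq_nonneg ((m:ℝ) + j), Nat.cast_nonneg (α := ℝ) m, Nat.cast_nonneg (α := ℝ) j]
      have e1 : j + 1 + (m + 1) = (m + j) + 2 := by ring
      have e2 : j + (m + 1) = (m + j) + 1 := by ring
      rw [e1]
      rw [e2] at ih
      push_cast at step hb ih ⊢
      linarith
  have hlim : Tendsto (fun j : ℕ => Real.log (stirlingSeq (m + 1)) - Real.log (stirlingSeq (j + (m + 1))))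
      atTop (nhds (Real.log (stirlingSeq (m + 1)) - Real.log (Real.sqrt π))) := by
    refine Tendsto.const_sub _ ?_
    exact ((Real.continuousAt_log (by positivity)).tendsto.comp
      (tendsto_stirlingSeq_sqrt_pi.comp (tendsto_add_atTop_nat (m + 1))))
  have hle : Real.log (stirlingSeq (m + 1)) - Real.log (Real.sqrt π) ≤ 1 / (2 * ((m : ℝ) + 1)) := by
    refine le_of_tendsto hlim ?_
    filter_upwards [] with j
    refine (key j).trans ?_
    have : 0 < 1 / (2 * ((m : ℝ) + 1 + j)) := by positivity
    linarith
  have hpos : 0 < stirlingSeq (m + 1) := stirlingSeq'_pos m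
  have hπ : 0 < Real.sqrt π := Real.sqrt_pos.mpr Real.pi_pos
  have h2 := Real.exp_le_exp.mpr (sub_le_iff_le_add.mp hle)
  rw [Real.exp_log hpos] at h2
  calc stirlingSeq (m+1) ≤ Real.exp (1 / (2 * ((m:ℝ) + 1)) + Real.log (Real.sqrt π)) := h2
    _ = Real.sqrt π * Real.exp (1 / (2 * ((m:ℝ)+1))) := by
        rw [Real.exp_add, Real.exp_log hπ]; ring

lemma stirling_lb (k : ℕ) (hk : 1 ≤ k) : Real.sqrt π ≤ stirlingSeq k := by
  obtain ⟨j, rfl⟩ : ∃ j, k = j + 1 := ⟨k - 1, by omega⟩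
  exact sqrt_pi_le_stirlingSeq j

lemma stirling_ub (k : ℕ) (hk : 1 ≤ k) :
    stirlingSeq k ≤ Real.sqrt π * Real.exp (1 / (2 * (k:ℝ))) := by
  obtain ⟨j, rfl⟩ : ∃ j, k = j + 1 := ⟨k - 1, by omega⟩
  have h := stirlingSeq_le j
  push_cast
  exact h


set_option maxHeartbeats 1000000 in
lemma entropy_est {u : ℝ} (hu : |u| ≤ 1/8) :
    |(1+u) * Real.log (1+u) + (1-u) * Real.log (1-u) - u^2| ≤ u^4 := by
  have h1 : |u| < 1 := lt_of_le_of_lt hu (by norm_num)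
  have h1' : |(-u)| < 1 := by rwa [abs_neg]
  have HA := Real.abs_log_sub_add_sum_range_le h1' 4
  have HB := Real.abs_log_sub_add_sum_range_le h1 4
  rw [show (4:ℕ) = 3 + 1 by rfl] at HA HB
  simp only [Finset.sum_range_succ, Finset.sum_range_zero, sub_neg_eq_add, abs_neg] at HA HB
  norm_num at HA HB
  rw [abs_le] at HA HB
  obtain ⟨HA1, HA2⟩ := HA
  obtain ⟨HB1, HB2⟩ := HB
  have h4 : |u|^4 = u^4 := by rw [← abs_pow]; exact abs_of_nonneg (by positivity)
  have hr : |u|^5 / (1 - |u|) ≤ u^4 / 7 := by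
    rw [div_le_div_iff₀ (by linarith) (by norm_num)]
    have h5 : |u|^5 = u^4 * |u| := by rw [show (5:ℕ) = 4+1 by rfl, pow_succ, h4]
    rw [h5]
    nlinarith [mul_nonneg (pow_nonneg (abs_nonneg u) 4) (by linarith : (0:ℝ) ≤ 1 - 8*|u|), h4]
  set r := |u|^5 / (1 - |u|) with hrdef
  set A := Real.log (1 + u) with hA
  set B := Real.log (1 - u) with hB
  have hup : (0:ℝ) ≤ 1 + u := by cases abs_le.mp hu; linarith
  have hum : (0:ℝ) ≤ 1 - u := by cases abs_le.mp hu; linarith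
  have e1 : (1+u) * A ≤ (1+u) * (u - u^2/2 + u^3/3 - u^4/4 + r) := by
    apply mul_le_mul_of_nonneg_left _ hup
    nlinarith [HA2]
  have e2 : (1+u) * (u - u^2/2 + u^3/3 - u^4/4 - r) ≤ (1+u) * A := by
    apply mul_le_mul_of_nonneg_left _ hup
    nlinarith [HA1]
  have e3 : (1-u) * B ≤ (1-u) * (-(u + u^2/2 + u^3/3 + u^4/4) + r) := by
    apply mul_le_mul_of_nonneg_left _ hum
    nlinarith [HB2]
  have e4 : (1-u) * (-(u + u^2/2 + u^3/3 + u^4/4) - r) ≤ (1-u) * B := by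
    apply mul_le_mul_of_nonneg_left _ hum
    nlinarith [HB1]
  have hr0 : (0:ℝ) ≤ r := div_nonneg (pow_nonneg (abs_nonneg u) 5) (by linarith)
  have hu4 : (0:ℝ) ≤ u^4 := by positivity
  have E5 : (1+u) * A + (1-u) * B ≤ u^2 + u^4/6 + 2*r :=
    calc (1+u) * A + (1-u) * B
        ≤ (1+u) * (u - u^2/2 + u^3/3 - u^4/4 + r) + (1-u) * (-(u + u^2/2 + u^3/3 + u^4/4) + r) :=
          add_le_add e1 e3
      _ = u^2 + u^4/6 + 2*r := by ring
  have E6 : u^2 + u^4/6 - 2*r ≤ (1+u) * A + (1-u) * B :=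
    calc u^2 + u^4/6 - 2*r
        = (1+u) * (u - u^2/2 + u^3/3 - u^4/4 - r) + (1-u) * (-(u + u^2/2 + u^3/3 + u^4/4) - r) := by
          ring
      _ ≤ (1+u) * A + (1-u) * B := add_le_add e2 e4
  rw [abs_le]
  constructor <;> linarith

end stirlingHelpers

section measureHelpers
open MeasureTheory Set

variable {μB : Measure ℝ} [IsProbabilityMeasure μB]

lemma bern_eq (h0 : μB {0} = 1/2) (h1 : μB {1} = 1/2) :
    μB = (1/2 : ℝ≥0∞) • Measure.dirac (0:ℝ) + (1/2 : ℝ≥0∞) • Measure.dirac (1:ℝ) := by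
  classical
  have hd : Disjoint ({0} : Set ℝ) {1} := by
    rw [Set.disjoint_singleton]; norm_num
  have hmp : MeasurableSet ({0,1} : Set ℝ) :=
    (measurableSet_singleton 0).union (measurableSet_singleton 1)
  have hpair : μB ({0,1} : Set ℝ) = 1 := by
    rw [Set.insert_eq, measure_union hd (measurableSet_singleton 1), h0, h1, one_div,
      ENNReal.inv_two_add_inv_two]
  have hcompl : μB (({0,1} : Set ℝ)ᶜ) = 0 := by
    rw [measure_compl hmp (measure_ne_top _ _), hpair, measure_univ, tsub_self]
  ext s hs
  have key : μB s = μB (s ∩ {0}) + μB (s ∩ {1}) := by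
    have h2 : μB (s ∩ {0,1}) = μB s := measure_inter_conull hcompl
    rw [← h2, Set.insert_eq, Set.inter_union_distrib_left]
    exact measure_union (hd.mono inter_subset_right inter_subset_right)
      (hs.inter (measurableSet_singleton 1))
  rw [key]
  simp only [Measure.add_apply, Measure.smul_apply, smul_eq_mul,
    Measure.dirac_apply' _ hs, Set.indicator_apply, Pi.one_apply]
  by_cases p0 : (0:ℝ) ∈ s <;> by_cases p1 : (1:ℝ) ∈ s
  · rw [Set.inter_eq_right.mpr (singleton_subset_iff.mpr p0),
      Set.inter_eq_right.mpr (singleton_subset_iff.mpr p1), h0, h1]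
    simp [p0, p1]
  · rw [Set.inter_eq_right.mpr (singleton_subset_iff.mpr p0),
      Set.inter_singleton_eq_empty.mpr p1, h0, measure_empty]
    simp [p0, p1]
  · rw [Set.inter_singleton_eq_empty.mpr p0,
      Set.inter_eq_right.mpr (singleton_subset_iff.mpr p1), h1, measure_empty]
    simp [p0, p1]
  · rw [Set.inter_singleton_eq_empty.mpr p0,
      Set.inter_singleton_eq_empty.mpr p1, measure_empty]
    simp [p0, p1]

set_option maxHeartbeats 1000000 in
lemma pi_bern (h0 : μB {0} = 1/2) (h1 : μB {1} = 1/2) (n : ℕ) :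
    Measure.pi (fun _ : Fin n => μB) =
      ∑ f : Fin n → Bool,
        ((2:ℝ≥0∞)^n)⁻¹ • Measure.dirac (fun i => if f i then (1:ℝ) else 0) := by
  classical
  refine Measure.pi_eq fun s hs => ?_
  rw [Measure.finset_sum_apply]
  simp only [Measure.smul_apply, smul_eq_mul,
    Measure.dirac_apply' _ (MeasurableSet.univ_pi hs), Set.indicator_apply,
    Set.mem_univ_pi, Pi.one_apply]
  have hμ : ∀ i : Fin n, μB (s i)
      = ∑ b : Bool, (2:ℝ≥0∞)⁻¹ * (if (if b then (1:ℝ) else 0) ∈ s i then 1 else 0) := by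
    intro i
    rw [bern_eq h0 h1]
    simp [Fintype.sum_bool, Measure.add_apply, Measure.smul_apply,
      smul_eq_mul, Measure.dirac_apply' _ (hs i), Set.indicator_apply, one_div]
    try ring
  calc (∑ f : Fin n → Bool, ((2:ℝ≥0∞)^n)⁻¹ *
          (if ∀ i, (if f i then (1:ℝ) else 0) ∈ s i then 1 else 0))
      = ∑ f : Fin n → Bool, ∏ i : Fin n,
          ((2:ℝ≥0∞)⁻¹ * (if (if f i then (1:ℝ) else 0) ∈ s i then 1 else 0)) := by
        refine Finset.sum_congr rfl fun f _ => ?_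
        rw [Finset.prod_mul_distrib, Finset.prod_const, Finset.prod_boole]
        simp only [Finset.card_univ, Fintype.card_fin, ENNReal.inv_pow, Finset.mem_univ, true_implies]
    _ = ∏ i : Fin n, ∑ b : Bool, (2:ℝ≥0∞)⁻¹ *
          (if (if b then (1:ℝ) else 0) ∈ s i then 1 else 0) := by
        rw [Finset.prod_univ_sum, Fintype.piFinset_univ]
    _ = ∏ i : Fin n, μB (s i) := Finset.prod_congr rfl fun i _ => (hμ i).symm

lemma card_count (n z : ℕ) :
    (Finset.univ.filter fun f : Fin n → Bool =>
      (Finset.univ.filter fun i => f i).card = z).card = n.choose z := by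
  classical
  have hpc := Finset.card_powersetCard z (Finset.univ : Finset (Fin n))
  rw [Finset.card_univ, Fintype.card_fin] at hpc
  rw [← hpc]
  refine Finset.card_bij' (fun f _ => Finset.univ.filter fun i => f i)
    (fun s _ => fun i => decide (i ∈ s)) ?_ ?_ ?_ ?_
  · intro f hf
    rw [Finset.mem_powersetCard]
    exact ⟨Finset.subset_univ _, (Finset.mem_filter.mp hf).2⟩
  · intro s hs
    show (fun f : Fin n → Bool => f ∈ Finset.univ.filter fun f : Fin n → Bool =>
      (Finset.univ.filter fun i => f i).card = z) (fun i => decide (i ∈ s))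
    simp only [Finset.mem_filter, Finset.mem_univ, true_and]
    have e : (Finset.univ.filter fun i : Fin n => decide (i ∈ s) = true) = s := by
      ext i; simp
    rw [show (Finset.univ.filter fun i : Fin n => (decide (i ∈ s) : Bool) = true) = s from e]
    exact (Finset.mem_powersetCard.mp hs).2
  · intro f _
    funext i
    simp
  · intro s _
    ext i
    simp

lemma prob_eq (h0 : μB {0} = 1/2) (h1 : μB {1} = 1/2) (n z : ℕ) :
    Measure.pi (fun _ : Fin n => μB) {ω : Fin n → ℝ | ∑ i, ω i = (z:ℝ)}
      = (n.choose z : ℝ≥0∞) / 2^n := by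
  classical
  have hmeas : MeasurableSet {ω : Fin n → ℝ | ∑ i, ω i = (z:ℝ)} := by
    have hsum : Measurable fun ω : Fin n → ℝ => ∑ i, ω i :=
      Finset.measurable_sum _ fun i _ => measurable_pi_apply i
    exact hsum (measurableSet_singleton _)
  rw [pi_bern h0 h1, Measure.finset_sum_apply]
  simp only [Measure.smul_apply, smul_eq_mul, Measure.dirac_apply' _ hmeas,
    Set.indicator_apply, Set.mem_setOf_eq, Pi.one_apply]
  have hcond : ∀ f : Fin n → Bool,
      ((∑ i, if f i then (1:ℝ) else 0) = (z:ℝ)) ↔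
        ((Finset.univ.filter fun i => f i).card = z) := by
    intro f
    rw [Finset.sum_boole]
    exact Nat.cast_inj
  calc (∑ f : Fin n → Bool, ((2:ℝ≥0∞)^n)⁻¹ *
          (if (∑ i, if f i then (1:ℝ) else 0) = (z:ℝ) then 1 else 0))
      = ∑ f : Fin n → Bool, ((2:ℝ≥0∞)^n)⁻¹ *
          (if (Finset.univ.filter fun i => f i).card = z then 1 else 0) := by
        refine Finset.sum_congr rfl fun f _ => ?_
        congr 1
        simp only [hcond f]
    _ = ((2:ℝ≥0∞)^n)⁻¹ * ∑ f : Fin n → Bool,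
          (if (Finset.univ.filter fun i => f i).card = z then 1 else 0) := by
        rw [Finset.mul_sum]
    _ = ((2:ℝ≥0∞)^n)⁻¹ * (n.choose z : ℝ≥0∞) := by
        rw [Finset.sum_boole, ← card_count n z]
    _ = (n.choose z : ℝ≥0∞) / 2^n := by
        rw [div_eq_mul_inv, mul_comm]

end measureHelpers

set_option maxHeartbeats 2000000

/-- **Local limit theorem for the symmetric binomial.**
There is a universal constant `C` such that for every `n ≥ 1`, for i.i.d. `Bernoulli(1/2)`
random variables `X₁, …, Xₙ` (modelled by the product of the measure `μB` on `ℝ` with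
`μB {0} = μB {1} = 1/2`), and every
`x ∈ Aₙ = {2z/√n - √n : z = 0, …, n} ∩ [-n^{1/4}/8, n^{1/4}/8]`,
`|P((2/√n) ∑ (Xᵢ - 1/2) = x) - (2/√(2πn)) e^{-x²/2}| ≤ C (1 + x⁴)/n · (2/√(2πn)) e^{-x²/2}`. -/
theorem binomial_local_limit
    (μB : Measure ℝ) [IsProbabilityMeasure μB]
    (h0 : μB {0} = 1 / 2) (h1 : μB {1} = 1 / 2) :
    ∃ C : ℝ, ∀ n : ℕ, 1 ≤ n → ∀ x : ℝ,
      (∃ z : ℕ, z ≤ n ∧ x = 2 * z / Real.sqrt n - Real.sqrt n) →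
      |x| ≤ (n : ℝ) ^ ((1 : ℝ) / 4) / 8 →
      |((Measure.pi fun _ : Fin n => μB)
            {ω | 2 / Real.sqrt n * ∑ i, (ω i - 1 / 2) = x}).toReal -
          2 / Real.sqrt (2 * Real.pi * n) * Real.exp (-x ^ 2 / 2)|
        ≤ C * ((1 + x ^ 4) / n) * (2 / Real.sqrt (2 * Real.pi * n) * Real.exp (-x ^ 2 / 2)) := by
  classical
  use 400
  intro n hn x hex hxb
  obtain ⟨z, hzn, hxz⟩ := hex
  have hν1 : (1:ℝ) ≤ (n:ℝ) := by exact_mod_cast hn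
  have hν0 : (0:ℝ) < (n:ℝ) := by linarith only [hν1]
  have hsnpos : 0 < Real.sqrt (n:ℝ) := Real.sqrt_pos.mpr hν0
  have hsn2 : Real.sqrt (n:ℝ) ^ 2 = (n:ℝ) := Real.sq_sqrt hν0.le
  have hy1 : 1 ≤ (n:ℝ) ^ ((1:ℝ)/4) := by
    calc (1:ℝ) = 1 ^ ((1:ℝ)/4) := (Real.one_rpow _).symm
      _ ≤ (n:ℝ) ^ ((1:ℝ)/4) := Real.rpow_le_rpow (by norm_num) hν1 (by norm_num)
  have hy2 : ((n:ℝ) ^ ((1:ℝ)/4))^2 = Real.sqrt (n:ℝ) := by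
    rw [← Real.rpow_natCast ((n:ℝ) ^ ((1:ℝ)/4)) 2, ← Real.rpow_mul hν0.le,
      Real.sqrt_eq_rpow]
    norm_num
  have hy4 : ((n:ℝ) ^ ((1:ℝ)/4))^4 = (n:ℝ) := by
    have h : ((n:ℝ) ^ ((1:ℝ)/4))^4 = (((n:ℝ) ^ ((1:ℝ)/4))^2)^2 := by ring
    rw [h, hy2, hsn2]
  set u := x / Real.sqrt (n:ℝ) with hudef
  clear_value u
  have hxsn : x * Real.sqrt (n:ℝ) = 2*(z:ℝ) - (n:ℝ) := by
    rw [hxz, sub_mul, div_mul_cancel₀ _ hsnpos.ne']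
    linear_combination (-1 : ℝ) * hsn2
  have huν : u * (n:ℝ) = 2*(z:ℝ) - (n:ℝ) := by
    rw [hudef, div_mul_eq_mul_div, div_eq_iff hsnpos.ne']
    linear_combination Real.sqrt (n:ℝ) * hxsn + (-x) * hsn2
  have h2z : 2*(z:ℝ) = (n:ℝ)*(1+u) := by linear_combination (-1:ℝ) * huν
  set m := n - z with hmdef
  have hmR : (m:ℝ) = (n:ℝ) - z := by rw [hmdef, Nat.cast_sub hzn]
  have h2m : 2*(m:ℝ) = (n:ℝ)*(1-u) := by rw [hmR]; linear_combination (1:ℝ) * huν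
  have hzm : (z:ℝ) + m = (n:ℝ) := by rw [hmR]; ring
  -- size bounds
  have habs_mul : |u| * Real.sqrt (n:ℝ) = |x| := by
    rw [hudef, abs_div, abs_of_pos hsnpos, div_mul_cancel₀ _ hsnpos.ne']
  have hsny : (n:ℝ) ^ ((1:ℝ)/4) ≤ Real.sqrt (n:ℝ) := by
    nlinarith only [hy2, hy1, sq_nonneg ((n:ℝ) ^ ((1:ℝ)/4) - 1)]
  have huabs : |u| ≤ 1/8 := by
    have h8 : |u| * Real.sqrt (n:ℝ) ≤ (1/8) * Real.sqrt (n:ℝ) := by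
      rw [habs_mul]
      linarith only [hxb, hsny]
    exact le_of_mul_le_mul_right (by linarith only [h8]) hsnpos
  have humem := abs_le.mp huabs
  have hu2 : u^2 ≤ 1/64 := by nlinarith only [sq_abs u, huabs, abs_nonneg u]
  have hu2ν : u^2 * (n:ℝ) = x^2 := by
    rw [hudef, div_pow, hsn2, div_mul_cancel₀ _ hν0.ne']
  have hu4ν : u^4 * (n:ℝ)^2 = x^4 := by
    rw [hudef, div_pow,
      show Real.sqrt (n:ℝ)^4 = (Real.sqrt (n:ℝ)^2)^2 by ring, hsn2,
      div_mul_cancel₀ _ (by positivity : ((n:ℝ)^2) ≠ 0)]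
  have hx4 : x^4 ≤ (n:ℝ) / 4096 := by
    have h1 : |x|^4 ≤ ((n:ℝ) ^ ((1:ℝ)/4)/8)^4 := pow_le_pow_left₀ (abs_nonneg x) hxb 4
    have h2 : |x|^4 = x^4 := by rw [← abs_pow]; exact abs_of_nonneg (by positivity)
    nlinarith only [hy4, h1, h2, hy1]
  have hz16 : 7*(n:ℝ) ≤ 16*(z:ℝ) := by
    nlinarith only [h2z, mul_nonneg hν0.le (by linarith only [humem] : (0:ℝ) ≤ u + 1/8)]
  have hm16 : 7*(n:ℝ) ≤ 16*(m:ℝ) := by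
    nlinarith only [h2m, mul_nonneg hν0.le (by linarith only [humem] : (0:ℝ) ≤ 1/8 - u)]
  have hzR : (0:ℝ) < z := by linarith only [hz16, hν1]
  have hmRpos : (0:ℝ) < m := by linarith only [hm16, hν1]
  have hz1 : 1 ≤ z := by
    rcases Nat.eq_zero_or_pos z with h | h
    · subst h; norm_num at hzR
    · exact h
  have hm1 : 1 ≤ m := by
    rcases Nat.eq_zero_or_pos m with h | h
    · rw [h] at hmRpos; norm_num at hmRpos
    · exact h
  -- event set and probability
  have hset : {ω : Fin n → ℝ | 2 / Real.sqrt (n:ℝ) * ∑ i, (ω i - 1/2) = x}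
      = {ω : Fin n → ℝ | ∑ i, ω i = (z:ℝ)} := by
    ext ω
    simp only [Set.mem_setOf_eq]
    rw [Finset.sum_sub_distrib, Finset.sum_const, Finset.card_univ, Fintype.card_fin,
      nsmul_eq_mul]
    rw [div_mul_eq_mul_div, div_eq_iff hsnpos.ne']
    constructor
    · intro h; linarith only [hxsn, h]
    · intro h; rw [h]; linarith only [hxsn]
  set P := (n.choose z : ℝ) / 2^n with hPdef
  have hProb : ((Measure.pi fun _ : Fin n => μB)
      {ω : Fin n → ℝ | 2 / Real.sqrt (n:ℝ) * ∑ i, (ω i - 1/2) = x}).toReal = P := by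
    rw [hset, prob_eq h0 h1 n z, ENNReal.toReal_div, hPdef]
    norm_num
  -- factorials via Stirling
  have hfact : ∀ k : ℕ, 1 ≤ k → (k.factorial : ℝ)
      = Stirling.stirlingSeq k * (Real.sqrt (2*(k:ℝ)) * ((k:ℝ)/Real.exp 1)^k) := by
    intro k hk
    have hkpos : (0:ℝ) < k := by exact_mod_cast hk
    have hden : Real.sqrt (2*(k:ℝ)) * ((k:ℝ)/Real.exp 1)^k ≠ 0 := by positivity
    rw [Stirling.stirlingSeq, div_mul_cancel₀ _ hden]
  have hcastfac : (n.choose z : ℝ) * (z.factorial : ℝ) * (m.factorial : ℝ) = (n.factorial : ℝ) := by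
    rw [hmdef]
    exact_mod_cast congrArg (Nat.cast : ℕ → ℝ) (Nat.choose_mul_factorial_mul_factorial hzn)
  have hPP : P = (n.factorial : ℝ) / ((z.factorial : ℝ) * (m.factorial : ℝ) * 2^n) := by
    rw [hPdef, div_eq_div_iff (by positivity) (by positivity)]
    linear_combination (2:ℝ)^n * hcastfac
  have hsqπ : (0:ℝ) < Real.sqrt Real.pi := Real.sqrt_pos.mpr Real.pi_pos
  have hπmul : Real.sqrt Real.pi * Real.sqrt Real.pi = Real.pi := Real.mul_self_sqrt Real.pi_pos.le
  have halb : Real.sqrt Real.pi ≤ Stirling.stirlingSeq n := stirling_lb n hn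
  have hblb : Real.sqrt Real.pi ≤ Stirling.stirlingSeq z := stirling_lb z hz1
  have hclb : Real.sqrt Real.pi ≤ Stirling.stirlingSeq m := stirling_lb m hm1
  have haub : Stirling.stirlingSeq n ≤ Real.sqrt Real.pi * Real.exp (1/(2*(n:ℝ))) :=
    stirling_ub n hn
  have hbub : Stirling.stirlingSeq z ≤ Real.sqrt Real.pi * Real.exp (1/(2*(z:ℝ))) :=
    stirling_ub z hz1
  have hcub : Stirling.stirlingSeq m ≤ Real.sqrt Real.pi * Real.exp (1/(2*(m:ℝ))) :=
    stirling_ub m hm1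
  have hapos : 0 < Stirling.stirlingSeq n := lt_of_lt_of_le hsqπ halb
  have hbpos : 0 < Stirling.stirlingSeq z := lt_of_lt_of_le hsqπ hblb
  have hcpos : 0 < Stirling.stirlingSeq m := lt_of_lt_of_le hsqπ hclb
  -- part 1 : sqrt identity
  have h1upos : (0:ℝ) < 1 + u := by linarith only [humem]
  have h1umpos : (0:ℝ) < 1 - u := by linarith only [humem]
  have hu2pos : (0:ℝ) < 1 - u^2 := by linarith only [hu2]
  have h2zpos : (0:ℝ) < 2*(z:ℝ) := by linarith only [hzR]
  have h2mpos : (0:ℝ) < 2*(m:ℝ) := by linarith only [hmRpos]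
  have part1 : Real.sqrt (2*(n:ℝ)) * (Real.sqrt (2*Real.pi*(n:ℝ)) * Real.sqrt (1-u^2))
      = 2 * Real.sqrt Real.pi * (Real.sqrt (2*(z:ℝ)) * Real.sqrt (2*(m:ℝ))) := by
    have hL : 0 ≤ Real.sqrt (2*(n:ℝ)) * (Real.sqrt (2*Real.pi*(n:ℝ)) * Real.sqrt (1-u^2)) := by
      positivity
    have hR : 0 ≤ 2 * Real.sqrt Real.pi * (Real.sqrt (2*(z:ℝ)) * Real.sqrt (2*(m:ℝ))) := by
      positivity
    have hsq : (Real.sqrt (2*(n:ℝ)) * (Real.sqrt (2*Real.pi*(n:ℝ)) * Real.sqrt (1-u^2)))^2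
        = (2 * Real.sqrt Real.pi * (Real.sqrt (2*(z:ℝ)) * Real.sqrt (2*(m:ℝ))))^2 := by
      simp only [mul_pow]
      rw [Real.sq_sqrt (by positivity : (0:ℝ) ≤ 2*(n:ℝ)),
        Real.sq_sqrt (by positivity : (0:ℝ) ≤ 2*Real.pi*(n:ℝ)),
        Real.sq_sqrt hu2pos.le,
        Real.sq_sqrt Real.pi_pos.le,
        Real.sq_sqrt (by positivity : (0:ℝ) ≤ 2*(z:ℝ)),
        Real.sq_sqrt (by positivity : (0:ℝ) ≤ 2*(m:ℝ))]
      linear_combination (-4*Real.pi*(n:ℝ)*(1-u)) * h2z + (-8*Real.pi*(z:ℝ)) * h2m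
    calc Real.sqrt (2*(n:ℝ)) * (Real.sqrt (2*Real.pi*(n:ℝ)) * Real.sqrt (1-u^2))
        = Real.sqrt ((Real.sqrt (2*(n:ℝ)) * (Real.sqrt (2*Real.pi*(n:ℝ)) * Real.sqrt (1-u^2)))^2) :=
          (Real.sqrt_sq hL).symm
      _ = Real.sqrt ((2 * Real.sqrt Real.pi * (Real.sqrt (2*(z:ℝ)) * Real.sqrt (2*(m:ℝ))))^2) := by
          rw [hsq]
      _ = 2 * Real.sqrt Real.pi * (Real.sqrt (2*(z:ℝ)) * Real.sqrt (2*(m:ℝ))) := Real.sqrt_sq hR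
  -- part 2 : exponential identity
  have hexpk : ∀ k : ℕ, (0:ℝ) < k → ((k:ℝ)/Real.exp 1)^k = Real.exp (k * (Real.log k - 1)) := by
    intro k hk
    rw [← Real.exp_log (pow_pos (div_pos hk (Real.exp_pos 1)) k), Real.log_pow,
      Real.log_div hk.ne' (Real.exp_ne_zero 1), Real.log_exp]
  have h2exp : (2:ℝ)^n = Real.exp ((n:ℝ) * Real.log 2) := by
    rw [← Real.exp_log (by norm_num : (0:ℝ) < 2), ← Real.exp_nat_mul, Real.log_exp]
  have hlog1p : Real.log (1+u) = Real.log 2 + Real.log (z:ℝ) - Real.log (n:ℝ) := by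
    have h1u : (1:ℝ)+u = 2*(z:ℝ)/(n:ℝ) := by
      rw [eq_div_iff hν0.ne']
      linear_combination (-1:ℝ) * h2z
    rw [h1u, Real.log_div h2zpos.ne' hν0.ne', Real.log_mul two_ne_zero hzR.ne']
  have hlog1m : Real.log (1-u) = Real.log 2 + Real.log (m:ℝ) - Real.log (n:ℝ) := by
    have h1u : (1:ℝ)-u = 2*(m:ℝ)/(n:ℝ) := by
      rw [eq_div_iff hν0.ne']
      linear_combination (-1:ℝ) * h2m
    rw [h1u, Real.log_div h2mpos.ne' hν0.ne', Real.log_mul two_ne_zero hmRpos.ne']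
  set g := (1+u)*Real.log (1+u) + (1-u)*Real.log (1-u) with hgdef
  clear_value g
  set ε := (n:ℝ)/2 * g - x^2/2 with hεdef
  clear_value ε
  have part2 : ((n:ℝ)/Real.exp 1)^n
      = Real.exp (-((n:ℝ)/2 * g)) * (((z:ℝ)/Real.exp 1)^z * (((m:ℝ)/Real.exp 1)^m * (2:ℝ)^n)) := by
    rw [hexpk n hν0, hexpk z hzR, hexpk m hmRpos, h2exp,
      ← Real.exp_add, ← Real.exp_add, ← Real.exp_add, Real.exp_eq_exp, hgdef, hlog1p, hlog1m]
    linear_combination (-(Real.log (m:ℝ) - 1)) * hzm + (-(Real.log (z:ℝ) - Real.log (m:ℝ))/2) * h2z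
  -- assemble: P = T * (ρ * A * exp (-ε))
  set T := 2 / Real.sqrt (2 * Real.pi * (n:ℝ)) * Real.exp (-x ^ 2 / 2) with hTdef
  set ρ := Real.sqrt Real.pi * Stirling.stirlingSeq n /
    (Stirling.stirlingSeq z * Stirling.stirlingSeq m) with hρdef
  set A := 1 / Real.sqrt (1-u^2) with hAdef
  have hsqrt1upos : 0 < Real.sqrt (1-u^2) := Real.sqrt_pos.mpr hu2pos
  have hSzpos : 0 < Real.sqrt (2*(z:ℝ)) := Real.sqrt_pos.mpr h2zpos
  have hSmpos : 0 < Real.sqrt (2*(m:ℝ)) := Real.sqrt_pos.mpr h2mpos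
  have hSnpos : 0 < Real.sqrt (2*(n:ℝ)) := Real.sqrt_pos.mpr (by positivity)
  have hPzpos : (0:ℝ) < ((z:ℝ)/Real.exp 1)^z := by positivity
  have hPmpos : (0:ℝ) < ((m:ℝ)/Real.exp 1)^m := by positivity
  have h2npos : (0:ℝ) < (2:ℝ)^n := by positivity
  have hSπνpos : 0 < Real.sqrt (2*Real.pi*(n:ℝ)) := Real.sqrt_pos.mpr (by positivity)
  have R1 : P = (Stirling.stirlingSeq n * Real.sqrt (2*(n:ℝ)) * ((n:ℝ)/Real.exp 1)^n)
      / (Stirling.stirlingSeq z * Stirling.stirlingSeq m * Real.sqrt (2*(z:ℝ))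
        * Real.sqrt (2*(m:ℝ)) * ((z:ℝ)/Real.exp 1)^z * ((m:ℝ)/Real.exp 1)^m * 2^n) := by
    rw [hPP, hfact n hn, hfact z hz1, hfact m hm1]
    ring
  have R2 : P = (Stirling.stirlingSeq n * Real.sqrt (2*(n:ℝ))
      / (Stirling.stirlingSeq z * Stirling.stirlingSeq m * Real.sqrt (2*(z:ℝ))
        * Real.sqrt (2*(m:ℝ)))) * Real.exp (-((n:ℝ)/2 * g)) := by
    rw [R1, part2]
    field_simp
  have hSn_eq : Real.sqrt (2*(n:ℝ)) = 2*Real.sqrt Real.pi * (Real.sqrt (2*(z:ℝ))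
      * Real.sqrt (2*(m:ℝ))) / (Real.sqrt (2*Real.pi*(n:ℝ)) * Real.sqrt (1-u^2)) := by
    rw [eq_div_iff (by positivity)]
    linear_combination part1
  have hee : Real.exp (-x^2/2) * Real.exp (-ε) = Real.exp (-((n:ℝ)/2*g)) := by
    rw [← Real.exp_add]
    congr 1
    rw [hεdef]; ring
  have key : P = T * (ρ * A * Real.exp (-ε)) := by
    rw [R2, hSn_eq, hTdef, hρdef, hAdef, ← hee]
    field_simp
  -- bounds on ρ
  have hbcpos : 0 < Stirling.stirlingSeq z * Stirling.stirlingSeq m := mul_pos hbpos hcpos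
  have hρub : ρ ≤ Real.exp (3/(n:ℝ)) := by
    rw [hρdef, div_le_iff₀ hbcpos]
    have hbc : Real.pi ≤ Stirling.stirlingSeq z * Stirling.stirlingSeq m :=
      calc Real.pi = Real.sqrt Real.pi * Real.sqrt Real.pi := hπmul.symm
        _ ≤ Stirling.stirlingSeq z * Stirling.stirlingSeq m :=
            mul_le_mul hblb hclb hsqπ.le (hsqπ.le.trans hblb)
    have he : Real.exp (1/(2*(n:ℝ))) ≤ Real.exp (3/(n:ℝ)) := by
      apply Real.exp_le_exp.mpr
      rw [div_le_div_iff₀ (by positivity) (by positivity)]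
      nlinarith only [hν0]
    calc Real.sqrt Real.pi * Stirling.stirlingSeq n
        ≤ Real.sqrt Real.pi * (Real.sqrt Real.pi * Real.exp (1/(2*(n:ℝ)))) :=
          mul_le_mul_of_nonneg_left haub hsqπ.le
      _ = Real.pi * Real.exp (1/(2*(n:ℝ))) := by rw [← mul_assoc, hπmul]
      _ ≤ Real.exp (3/(n:ℝ)) * (Stirling.stirlingSeq z * Stirling.stirlingSeq m) := by
          linarith only [mul_le_mul_of_nonneg_left he Real.pi_pos.le,
            mul_le_mul_of_nonneg_right hbc (Real.exp_pos (3/(n:ℝ))).le]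
  have hρlb : Real.exp (-(3/(n:ℝ))) ≤ ρ := by
    rw [hρdef, le_div_iff₀ hbcpos]
    have hsz : 1/(2*(z:ℝ)) + 1/(2*(m:ℝ)) ≤ 3/(n:ℝ) := by
      have e1 : 1/(2*(z:ℝ)) ≤ 8/(7*(n:ℝ)) := by
        rw [div_le_div_iff₀ h2zpos (by positivity)]; nlinarith only [hz16]
      have e2 : 1/(2*(m:ℝ)) ≤ 8/(7*(n:ℝ)) := by
        rw [div_le_div_iff₀ h2mpos (by positivity)]; nlinarith only [hm16]
      have e3 : (8:ℝ)/(7*(n:ℝ)) + 8/(7*(n:ℝ)) ≤ 3/(n:ℝ) := by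
        rw [← add_div, div_le_div_iff₀ (by positivity) (by positivity)]
        nlinarith only [hν0]
      linarith
    have hbcub : Stirling.stirlingSeq z * Stirling.stirlingSeq m
        ≤ Real.pi * Real.exp (1/(2*(z:ℝ)) + 1/(2*(m:ℝ))) := by
      calc Stirling.stirlingSeq z * Stirling.stirlingSeq m
          ≤ (Real.sqrt Real.pi * Real.exp (1/(2*(z:ℝ))))
            * (Real.sqrt Real.pi * Real.exp (1/(2*(m:ℝ)))) :=
            mul_le_mul hbub hcub hcpos.le (by positivity)
        _ = (Real.sqrt Real.pi * Real.sqrt Real.pi)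
            * (Real.exp (1/(2*(z:ℝ))) * Real.exp (1/(2*(m:ℝ)))) := by ring
        _ = Real.pi * Real.exp (1/(2*(z:ℝ)) + 1/(2*(m:ℝ))) := by
            rw [hπmul, ← Real.exp_add]
    calc Real.exp (-(3/(n:ℝ))) * (Stirling.stirlingSeq z * Stirling.stirlingSeq m)
        ≤ Real.exp (-(3/(n:ℝ))) * (Real.pi * Real.exp (1/(2*(z:ℝ)) + 1/(2*(m:ℝ)))) :=
          mul_le_mul_of_nonneg_left hbcub (Real.exp_pos _).le
      _ = Real.pi * Real.exp (1/(2*(z:ℝ)) + 1/(2*(m:ℝ)) + -(3/(n:ℝ))) := by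
          rw [Real.exp_add (1/(2*(z:ℝ)) + 1/(2*(m:ℝ))) (-(3/(n:ℝ)))]; ring
      _ ≤ Real.pi * 1 := by
          have : Real.exp (1/(2*(z:ℝ)) + 1/(2*(m:ℝ)) + -(3/(n:ℝ))) ≤ 1 :=
            Real.exp_le_one_iff.mpr (by linarith)
          exact mul_le_mul_of_nonneg_left this Real.pi_pos.le
      _ ≤ Real.sqrt Real.pi * Stirling.stirlingSeq n := by
          linarith only [mul_le_mul_of_nonneg_left halb hsqπ.le, hπmul]
  have hρpos : 0 < ρ := lt_of_lt_of_le (Real.exp_pos _) hρlb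
  -- bounds on A
  have hsqrt1u : Real.sqrt (1-u^2) ≤ 1 := by
    calc Real.sqrt (1-u^2) ≤ Real.sqrt 1 := Real.sqrt_le_sqrt (by linarith only [sq_nonneg u])
      _ = 1 := Real.sqrt_one
  have hss : Real.sqrt (1-u^2)^2 = 1-u^2 := Real.sq_sqrt hu2pos.le
  have hA1 : 1 ≤ A := by
    rw [hAdef, le_div_iff₀ hsqrt1upos]
    linarith only [hsqrt1u]
  have hA2 : A ≤ 1 + 2*u^2 := by
    have hsge : 1 - u^2 ≤ Real.sqrt (1-u^2) := by
      linarith only [hss, mul_nonneg hsqrt1upos.le (sub_nonneg.mpr hsqrt1u)]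
    rw [hAdef, div_le_iff₀ hsqrt1upos]
    linarith only [hsge, mul_nonneg (sq_nonneg u) (sub_nonneg.mpr hsge),
      mul_nonneg (sq_nonneg u) (by linarith only [hu2] : (0:ℝ) ≤ 1 - 2*u^2)]
  have hA0 : (0:ℝ) < A := lt_of_lt_of_le one_pos hA1
  -- bound on ε
  have hεbound : |ε| ≤ x^4/(2*(n:ℝ)) := by
    have hg := entropy_est huabs
    have hεeq : ε = (n:ℝ)/2 * ((1+u)*Real.log (1+u) + (1-u)*Real.log (1-u) - u^2) := by
      rw [hεdef, hgdef]; linear_combination (1/2 : ℝ) * hu2ν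
    rw [hεeq, abs_mul, abs_of_nonneg (by positivity : (0:ℝ) ≤ (n:ℝ)/2)]
    calc (n:ℝ)/2 * |(1+u)*Real.log (1+u) + (1-u)*Real.log (1-u) - u^2|
        ≤ (n:ℝ)/2 * u^4 := mul_le_mul_of_nonneg_left hg (by positivity)
      _ = x^4/(2*(n:ℝ)) := by
          rw [eq_div_iff (by positivity)]
          linear_combination hu4ν
  have hexpub : Real.exp (-ε) ≤ Real.exp (x^4/(2*(n:ℝ))) :=
    Real.exp_le_exp.mpr (by linarith only [(abs_le.mp hεbound).1])
  have hexplb : Real.exp (-(x^4/(2*(n:ℝ)))) ≤ Real.exp (-ε) :=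
    Real.exp_le_exp.mpr (by linarith only [(abs_le.mp hεbound).2])
  -- exponential estimates
  have ht0 : (0:ℝ) ≤ 3/(n:ℝ) + x^4/(2*(n:ℝ)) := by positivity
  have htν : (3/(n:ℝ) + x^4/(2*(n:ℝ))) * (n:ℝ) = 3 + x^4/2 := by
    field_simp
  have ht4 : 3/(n:ℝ) + x^4/(2*(n:ℝ)) ≤ 4 := by
    have ha : 3/(n:ℝ) ≤ 3 := by rw [div_le_iff₀ hν0]; linarith only [hν1]
    have hb : x^4/(2*(n:ℝ)) ≤ 1 := by rw [div_le_iff₀ (by positivity)]; linarith only [hx4, hν0]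
    linarith
  have hEpos : 0 < Real.exp (3/(n:ℝ) + x^4/(2*(n:ℝ))) := Real.exp_pos _
  have hE55 : Real.exp (3/(n:ℝ) + x^4/(2*(n:ℝ))) ≤ 55 := by
    calc Real.exp (3/(n:ℝ) + x^4/(2*(n:ℝ))) ≤ Real.exp 4 := Real.exp_le_exp.mpr ht4
      _ = Real.exp 1 ^ (4:ℕ) := by
          rw [← Real.exp_nat_mul]; norm_num
      _ ≤ 2.7182818286 ^ (4:ℕ) := pow_le_pow_left₀ (Real.exp_pos 1).le Real.exp_one_lt_d9.le 4
      _ ≤ 55 := by norm_num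
  have hE1 : Real.exp (3/(n:ℝ) + x^4/(2*(n:ℝ))) - 1
      ≤ (3/(n:ℝ) + x^4/(2*(n:ℝ))) * Real.exp (3/(n:ℝ) + x^4/(2*(n:ℝ))) := by
    have h := Real.add_one_le_exp (-(3/(n:ℝ) + x^4/(2*(n:ℝ))))
    rw [Real.exp_neg] at h
    have h2 := mul_le_mul_of_nonneg_left h hEpos.le
    rw [mul_inv_cancel₀ hEpos.ne'] at h2
    linarith only [h2]
  have hexp_low : 1 - (3/(n:ℝ) + x^4/(2*(n:ℝ))) ≤ Real.exp (-(3/(n:ℝ) + x^4/(2*(n:ℝ)))) := by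
    linarith only [Real.add_one_le_exp (-(3/(n:ℝ) + x^4/(2*(n:ℝ))))]
  -- D bounds
  have hDub : ρ * A * Real.exp (-ε) ≤ (1+2*u^2) * Real.exp (3/(n:ℝ) + x^4/(2*(n:ℝ))) := by
    calc ρ * A * Real.exp (-ε)
        ≤ (Real.exp (3/(n:ℝ)) * (1+2*u^2)) * Real.exp (x^4/(2*(n:ℝ))) := by
          apply mul_le_mul (mul_le_mul hρub hA2 hA0.le (Real.exp_pos _).le) hexpub
            (Real.exp_pos _).le (by positivity)
      _ = (1+2*u^2) * Real.exp (3/(n:ℝ) + x^4/(2*(n:ℝ))) := by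
          rw [Real.exp_add]; ring
  have hDlb : Real.exp (-(3/(n:ℝ) + x^4/(2*(n:ℝ)))) ≤ ρ * A * Real.exp (-ε) := by
    rw [show -(3/(n:ℝ) + x^4/(2*(n:ℝ))) = -(3/(n:ℝ)) + -(x^4/(2*(n:ℝ))) by ring, Real.exp_add]
    calc Real.exp (-(3/(n:ℝ))) * Real.exp (-(x^4/(2*(n:ℝ))))
        ≤ ρ * Real.exp (-ε) :=
          mul_le_mul hρlb hexplb (Real.exp_pos _).le hρpos.le
      _ ≤ ρ * A * Real.exp (-ε) := by
          linarith only [mul_le_mul_of_nonneg_left hA1 (mul_pos hρpos (Real.exp_pos (-ε))).le]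
  -- final
  rw [hProb, key]
  have hTpos : 0 < T := by rw [hTdef]; positivity
  rw [show T * (ρ * A * Real.exp (-ε)) - T = T * (ρ * A * Real.exp (-ε) - 1) by ring,
    abs_mul, abs_of_pos hTpos]
  have hd : |ρ * A * Real.exp (-ε) - 1| ≤ 400 * ((1+x^4)/(n:ℝ)) := by
    rw [abs_le]
    have h400 : 400*((1+x^4)/(n:ℝ)) = (400*(1+x^4))/(n:ℝ) := by ring
    constructor
    · have h1 : 1 - (3/(n:ℝ) + x^4/(2*(n:ℝ))) ≤ ρ * A * Real.exp (-ε) :=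
        le_trans hexp_low hDlb
      have h2 : 3/(n:ℝ) + x^4/(2*(n:ℝ)) ≤ 400 * ((1+x^4)/(n:ℝ)) := by
        rw [h400, le_div_iff₀ hν0, htν]
        nlinarith only [sq_nonneg (x^2)]
      linarith only [h1, h2]
    · have hdd : ρ * A * Real.exp (-ε) - 1
          ≤ (3/(n:ℝ) + x^4/(2*(n:ℝ))) * Real.exp (3/(n:ℝ) + x^4/(2*(n:ℝ)))
            + 2*u^2*Real.exp (3/(n:ℝ) + x^4/(2*(n:ℝ))) := by
        have e1 : (1+2*u^2) * Real.exp (3/(n:ℝ) + x^4/(2*(n:ℝ))) - 1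
            = (Real.exp (3/(n:ℝ) + x^4/(2*(n:ℝ))) - 1)
              + 2*u^2*Real.exp (3/(n:ℝ) + x^4/(2*(n:ℝ))) := by ring
        linarith only [hDub, hE1, e1]
      have huE : 2*u^2*Real.exp (3/(n:ℝ) + x^4/(2*(n:ℝ))) ≤ 110*u^2 := by
        linarith only [mul_le_mul_of_nonneg_left hE55 (sq_nonneg u)]
      have htE : (3/(n:ℝ) + x^4/(2*(n:ℝ))) * Real.exp (3/(n:ℝ) + x^4/(2*(n:ℝ)))
          ≤ 55 * (3/(n:ℝ) + x^4/(2*(n:ℝ))) := by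
          linarith only [mul_le_mul_of_nonneg_left hE55 ht0]
      have hfin : 55 * (3/(n:ℝ) + x^4/(2*(n:ℝ))) + 110*u^2 ≤ 400 * ((1+x^4)/(n:ℝ)) := by
        rw [h400, le_div_iff₀ hν0]
        have e1 : (55 * (3/(n:ℝ) + x^4/(2*(n:ℝ))) + 110*u^2) * (n:ℝ)
            = 55*((3/(n:ℝ) + x^4/(2*(n:ℝ)))*(n:ℝ)) + 110*(u^2*(n:ℝ)) := by ring
        rw [e1, htν, hu2ν]
        nlinarith only [sq_nonneg (x^2 - 1), sq_nonneg x]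
      linarith only [hdd, huE, htE, hfin]
  calc T * |ρ * A * Real.exp (-ε) - 1| ≤ T * (400*((1+x^4)/(n:ℝ))) :=
        mul_le_mul_of_nonneg_left hd hTpos.le
    _ = 400 * ((1 + x ^ 4) / (n:ℝ)) * T := by ring
end

section
/- Let X be an integer-valued random variable whose support is {s_0, s_1, s_2, …} (a set of integers with P(X = s_i) > 0 for each i) such that the greatest common divisor of {|s_i − s_0| : i ≥ 1} equals 1. Then there exist a positive integer m and an integer z such that, for X_1, …, X_m i.i.d. copies of X, both P(X_1 + … + X_m = z) > 0 and P(X_1 + … + X_m = z + 1) > 0. Consequently, the law of X_1 + … + X_m − z has a Bernoulli(1/2) component: there exists ε > 0 with Law(X_1 + … + X_m − z) ≥ ε·Ber(1/2) as measures, where Ber(1/2) assigns probability 1/2 to each of 0 and 1. -/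
open MeasureTheory
open scoped ENNReal

private lemma pi_sum_pos (μ : Measure ℤ) [IsProbabilityMeasure μ] (m : ℕ) (L : List ℤ)
    (hL : L.length = m) (h : ∀ a ∈ L, μ {a} ≠ 0) :
    0 < (Measure.pi fun _ : Fin m => μ) {ω | (∑ i, ω i) = L.sum} := by
  subst hL
  have hsub : ({L.get} : Set (Fin L.length → ℤ)) ⊆ {ω | (∑ i, ω i) = L.sum} := by
    rintro ω rfl
    simp only [Set.mem_setOf_eq]
    rw [← List.sum_ofFn, List.ofFn_get]
  refine lt_of_lt_of_le ?_ (measure_mono hsub)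
  rw [← Set.univ_pi_singleton, Measure.pi_pi, pos_iff_ne_zero]
  exact Finset.prod_ne_zero_iff.mpr fun i _ => h _ (L.get_mem ..)

/-- The achievable shifted sums: `x` such that some list of support points of `μ`
sums to `len • s₀ + x`. -/
private def achSubmonoid (μ : Measure ℤ) (s₀ : ℤ) : AddSubmonoid ℤ where
  carrier := {x | ∃ L : List ℤ, (∀ a ∈ L, μ {a} ≠ 0) ∧ L.sum = L.length • s₀ + x}
  zero_mem' := ⟨[], by simp, by simp⟩
  add_mem' := by
    rintro x y ⟨L₁, h₁, hs₁⟩ ⟨L₂, h₂, hs₂⟩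
    refine ⟨L₁ ++ L₂, ?_, ?_⟩
    · intro a ha
      rcases List.mem_append.1 ha with h | h
      exacts [h₁ a h, h₂ a h]
    · simp only [List.sum_append, List.length_append, hs₁, hs₂, add_nsmul]
      ring

/-- **Existence of a Bernoulli(1/2) component.**
Let `X` be an integer-valued random variable with law `μ` whose support differences from a
support point `s₀` have greatest common divisor `1`. Then there exist a positive integer
`m` and an integer `z` such that the sum of `m` i.i.d. copies of `X` takes both values `z`
and `z + 1` with positive probability; consequently, the law of `X₁ + ⋯ + X_m - z` has a
`Bernoulli(1/2)` component with some weight `ε > 0`. -/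
theorem exists_bernoulli_component
    (μ : Measure ℤ) (hprob : IsProbabilityMeasure μ)
    (s₀ : ℤ) (hs₀ : μ {s₀} ≠ 0)
    (hgcd : ∀ d : ℕ, (∀ s : ℤ, μ {s} ≠ 0 → (d : ℤ) ∣ (s - s₀)) → d = 1) :
    ∃ m : ℕ, 0 < m ∧ ∃ z : ℤ,
      0 < (Measure.pi fun _ : Fin m => μ) {ω | (∑ i, ω i) = z} ∧
      0 < (Measure.pi fun _ : Fin m => μ) {ω | (∑ i, ω i) = z + 1} ∧
      ∃ ε : ℝ, 0 < ε ∧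
        ENNReal.ofReal ε •
            ((2⁻¹ : ℝ≥0∞) • Measure.dirac (0 : ℤ) + (2⁻¹ : ℝ≥0∞) • Measure.dirac (1 : ℤ))
          ≤ Measure.map (fun ω : Fin m → ℤ => (∑ i, ω i) - z)
              (Measure.pi fun _ : Fin m => μ) := by
  classical
  set D : Set ℤ := {x | ∃ s, μ {s} ≠ 0 ∧ s - s₀ = x} with hD
  -- Step 1: 1 belongs to the subgroup generated by D.
  have hone : (1 : ℤ) ∈ AddSubgroup.closure D := by
    obtain ⟨g, hg⟩ := Int.subgroup_cyclic (AddSubgroup.closure D)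
    have hgd : ∀ s : ℤ, μ {s} ≠ 0 → ((g.natAbs : ℤ)) ∣ (s - s₀) := by
      intro s hs
      have hmem : (s - s₀) ∈ AddSubgroup.closure D :=
        AddSubgroup.subset_closure ⟨s, hs, rfl⟩
      rw [hg, AddSubgroup.mem_closure_singleton] at hmem
      obtain ⟨n, hn⟩ := hmem
      exact Int.natAbs_dvd.2 ⟨n, by rw [← hn, smul_eq_mul, mul_comm]⟩
    have hg1 : g.natAbs = 1 := hgcd _ hgd
    have : g = 1 ∨ g = -1 := Int.natAbs_eq_iff.1 hg1
    have hgmem : g ∈ AddSubgroup.closure D := by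
      rw [hg]; exact AddSubgroup.subset_closure rfl
    rcases this with rfl | rfl
    · exact hgmem
    · simpa using AddSubgroup.neg_mem _ hgmem
  -- Step 2: from subgroup membership, find x with x, x+1 in the submonoid closure.
  have hstep : ∀ y ∈ AddSubgroup.closure D,
      ∃ x, x ∈ AddSubmonoid.closure D ∧ x + y ∈ AddSubmonoid.closure D := by
    intro y hy
    induction hy using AddSubgroup.closure_induction with
    | mem d hd =>
        exact ⟨0, AddSubmonoid.zero_mem _, by
          simpa using AddSubmonoid.subset_closure hd⟩
    | zero => exact ⟨0, AddSubmonoid.zero_mem _, by simpa using AddSubmonoid.zero_mem _⟩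
    | add y₁ y₂ h₁ h₂ ih₁ ih₂ =>
        obtain ⟨x₁, hx₁, hx₁'⟩ := ih₁
        obtain ⟨x₂, hx₂, hx₂'⟩ := ih₂
        exact ⟨x₁ + x₂, AddSubmonoid.add_mem _ hx₁ hx₂, by
          have := AddSubmonoid.add_mem _ hx₁' hx₂'
          convert this using 1; ring⟩
    | neg y₁ h₁ ih =>
        obtain ⟨x₁, hx₁, hx₁'⟩ := ih
        exact ⟨x₁ + y₁, hx₁', by simpa using hx₁⟩
  obtain ⟨x, hx, hx1⟩ := hstep 1 hone
  -- Step 3: the submonoid closure of D is contained in the achievable set.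
  have hDA : AddSubmonoid.closure D ≤ achSubmonoid μ s₀ := by
    refine AddSubmonoid.closure_le.2 ?_
    rintro _ ⟨s, hs, rfl⟩
    exact ⟨[s], by simpa using hs, by simp⟩
  obtain ⟨L₁, hL₁, hsum₁⟩ := hDA hx
  obtain ⟨L₂, hL₂, hsum₂⟩ := hDA hx1
  -- Step 4: pad the lists to common length.
  set m : ℕ := L₁.length + L₂.length + 1 with hm
  set L₁' : List ℤ := L₁ ++ List.replicate (L₂.length + 1) s₀ with hL₁'def
  set L₂' : List ℤ := L₂ ++ List.replicate (L₁.length + 1) s₀ with hL₂'def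
  have hlen₁ : L₁'.length = m := by simp [hL₁'def, hm]; omega
  have hlen₂ : L₂'.length = m := by simp [hL₂'def, hm]; omega
  have hmem₁ : ∀ a ∈ L₁', μ {a} ≠ 0 := by
    intro a ha
    rcases List.mem_append.1 ha with h | h
    · exact hL₁ a h
    · rw [List.eq_of_mem_replicate h]; exact hs₀
  have hmem₂ : ∀ a ∈ L₂', μ {a} ≠ 0 := by
    intro a ha
    rcases List.mem_append.1 ha with h | h
    · exact hL₂ a h
    · rw [List.eq_of_mem_replicate h]; exact hs₀
  set z : ℤ := m • s₀ + x with hz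
  have hzsum₁ : L₁'.sum = z := by
    simp only [hL₁'def, List.sum_append, List.sum_replicate, hsum₁, hz, hm]
    simp only [nsmul_eq_mul]
    push_cast
    ring
  have hzsum₂ : L₂'.sum = z + 1 := by
    simp only [hL₂'def, List.sum_append, List.sum_replicate, hsum₂, hz, hm]
    simp only [nsmul_eq_mul]
    push_cast
    ring
  have ha : 0 < (Measure.pi fun _ : Fin m => μ) {ω | (∑ i, ω i) = z} := by
    have := pi_sum_pos μ m L₁' hlen₁ hmem₁
    rwa [hzsum₁] at this
  have hb : 0 < (Measure.pi fun _ : Fin m => μ) {ω | (∑ i, ω i) = z + 1} := by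
    have := pi_sum_pos μ m L₂' hlen₂ hmem₂
    rwa [hzsum₂] at this
  refine ⟨m, by omega, z, ha, hb, ?_⟩
  -- Step 5: the Bernoulli component.
  set ν := Measure.map (fun ω : Fin m → ℤ => (∑ i, ω i) - z) (Measure.pi fun _ : Fin m => μ)
    with hν
  have hf : Measurable (fun ω : Fin m → ℤ => (∑ i, ω i) - z) :=
    (Finset.measurable_sum _ fun i _ => measurable_pi_apply i).sub measurable_const
  have hν0 : ν {0} = (Measure.pi fun _ : Fin m => μ) {ω | (∑ i, ω i) = z} := by
    rw [hν, Measure.map_apply hf (measurableSet_singleton 0)]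
    congr 1
    ext ω
    simp [sub_eq_zero]
  have hν1 : ν {1} = (Measure.pi fun _ : Fin m => μ) {ω | (∑ i, ω i) = z + 1} := by
    rw [hν, Measure.map_apply hf (measurableSet_singleton 1)]
    congr 1
    ext ω
    simp only [Set.mem_setOf_eq, Set.mem_preimage, Set.mem_singleton_iff, sub_eq_iff_eq_add]
    omega
  have hν0top : ν {0} ≠ ⊤ := by
    have : IsProbabilityMeasure ν := Measure.isProbabilityMeasure_map hf.aemeasurable
    exact measure_ne_top _ _
  have hν1top : ν {1} ≠ ⊤ := by
    have : IsProbabilityMeasure ν := Measure.isProbabilityMeasure_map hf.aemeasurable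
    exact measure_ne_top _ _
  have hν0pos : 0 < ν {0} := hν0 ▸ ha
  have hν1pos : 0 < ν {1} := hν1 ▸ hb
  refine ⟨min (ν {0}).toReal (ν {1}).toReal,
    lt_min (ENNReal.toReal_pos hν0pos.ne' hν0top) (ENNReal.toReal_pos hν1pos.ne' hν1top), ?_⟩
  set ε : ℝ := min (ν {0}).toReal (ν {1}).toReal with hε
  have h0 : ENNReal.ofReal ε ≤ ν {0} :=
    ENNReal.ofReal_le_of_le_toReal (min_le_left _ _)
  have h1 : ENNReal.ofReal ε ≤ ν {1} :=
    ENNReal.ofReal_le_of_le_toReal (min_le_right _ _)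
  refine Measure.le_iff.2 fun s hs => ?_
  have hsub : ∀ A : Set ℤ, A ⊆ s → ν A ≤ ν s := fun A h => measure_mono h
  by_cases m0 : (0 : ℤ) ∈ s <;> by_cases m1 : (1 : ℤ) ∈ s <;>
    simp only [Measure.smul_apply, Measure.coe_add, Pi.add_apply,
      Measure.dirac_apply' _ hs, Set.indicator_apply, m0, m1, if_pos, if_neg,
      Set.mem_singleton_iff, Pi.one_apply, if_true, if_false, smul_eq_mul,
      mul_one, mul_zero, add_zero, zero_add, not_false_iff]
  · -- both 0 and 1 in s
    rw [ENNReal.inv_two_add_inv_two, mul_one]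
    calc ENNReal.ofReal ε ≤ ν {0} := h0
      _ ≤ ν s := hsub _ (by simpa using m0)
  · -- only 0
    calc ENNReal.ofReal ε * 2⁻¹ ≤ ENNReal.ofReal ε * 1 := by
          gcongr; exact ENNReal.inv_le_one.2 one_le_two
      _ = ENNReal.ofReal ε := mul_one _
      _ ≤ ν {0} := h0
      _ ≤ ν s := hsub _ (by simpa using m0)
  · -- only 1
    calc ENNReal.ofReal ε * 2⁻¹ ≤ ENNReal.ofReal ε * 1 := by
          gcongr; exact ENNReal.inv_le_one.2 one_le_two
      _ = ENNReal.ofReal ε := mul_one _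
      _ ≤ ν {1} := h1
      _ ≤ ν s := hsub _ (by simpa using m1)
  · simp
end
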